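/- arXiv:1707.08634 — 8 statements merged into one kernel-verified Lean document; each statement's English description precedes it below -/
import Mathlib

section
/- Let {n_k}_{k≥1} be a sequence of positive integers and let 𝒥 = {J_σ : σ ∈ D} be a collection of nonempty compact subsets of ℝ^N such that diam(J_σ) > 0 for every σ, J_{σ*j} ⊆ J_σ for every σ and j, and for each k ≥ 1 and each σ ∈ D_{k−1} the sets J_{σ*1}, ..., J_{σ*n_k} are pairwise disjoint. Suppose for some s > 0 that Σ_{j=1}^{n_k} diam(J_{σ*j})^s ≥ diam(J_σ)^s for every k ≥ 1 and every σ ∈ D_{k−1}. Then there exists a Borel probability measure μ on ℝ^N with μ(F) = 1, where F = ⋂_{k≥0} ⋃_{σ∈D_k} J_σ, such that μ(J_σ) ≤ (diam(J_σ)/diam(J_∅))^s for every word σ ∈ D. -/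
open Filter Topology Finset MeasureTheory
open scoped ENNReal

/-- `Dk n k` is the set of words `(i_1, ..., i_k)` with `1 ≤ i_j ≤ n j` for each `j`. -/
def Dk (n : ℕ → ℕ) : ℕ → Finset (List ℕ)
  | 0 => {[]}
  | k + 1 => ((Dk n k) ×ˢ (Finset.Icc 1 (n (k + 1)))).image fun p => p.1 ++ [p.2]

section Aux

theorem mem_Dk_succ {n : ℕ → ℕ} {k : ℕ} {σ : List ℕ} :
    σ ∈ Dk n (k+1) ↔ ∃ τ ∈ Dk n k, ∃ j ∈ Finset.Icc 1 (n (k+1)), σ = τ ++ [j] := by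
  simp only [Dk, Finset.mem_image, Finset.mem_product, Prod.exists]
  constructor
  · rintro ⟨a, b, ⟨h1, h2⟩, rfl⟩; exact ⟨a, h1, b, h2, rfl⟩
  · rintro ⟨a, h1, b, h2, rfl⟩; exact ⟨a, b, ⟨h1, h2⟩, rfl⟩

theorem Dk_length {n : ℕ → ℕ} : ∀ {k : ℕ} {σ : List ℕ}, σ ∈ Dk n k → σ.length = k := by
  intro k
  induction k with
  | zero => intro σ h; simp [Dk] at h; simp [h]
  | succ k ih =>
    intro σ h
    obtain ⟨τ, hτ, j, hj, rfl⟩ := mem_Dk_succ.1 h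
    simp [ih hτ]

theorem append_mem_Dk {n : ℕ → ℕ} {k : ℕ} {σ : List ℕ} (h : σ ∈ Dk n k) {j : ℕ}
    (hj : j ∈ Finset.Icc 1 (n (k+1))) : σ ++ [j] ∈ Dk n (k+1) :=
  mem_Dk_succ.2 ⟨σ, h, j, hj, rfl⟩

theorem Dk_injOn {n : ℕ → ℕ} {k : ℕ} :
    Set.InjOn (fun p : List ℕ × ℕ => p.1 ++ [p.2]) ((Dk n k) ×ˢ (Finset.Icc 1 (n (k + 1)))) := by
  rintro ⟨a, b⟩ _ ⟨c, d⟩ _ h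
  simp only at h
  obtain ⟨h1, h2⟩ := List.append_inj' h rfl
  simp_all

theorem Dk_sum {n : ℕ → ℕ} {k : ℕ} {M : Type*} [AddCommMonoid M] (f : List ℕ → M) :
    ∑ σ ∈ Dk n (k+1), f σ
      = ∑ τ ∈ Dk n k, ∑ j ∈ Finset.Icc 1 (n (k+1)), f (τ ++ [j]) := by
  rw [show Dk n (k+1) = ((Dk n k) ×ˢ (Finset.Icc 1 (n (k + 1)))).image
      (fun p => p.1 ++ [p.2]) from rfl,
    Finset.sum_image (fun p hp q hq h => Dk_injOn (by exact_mod_cast hp) (by exact_mod_cast hq) h),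
    Finset.sum_product]

/-- `Sw n J s σ` is `∑_j diam(J (σ*j))^s`. -/
noncomputable def Sw {N : ℕ} (n : ℕ → ℕ) (J : List ℕ → Set (EuclideanSpace ℝ (Fin N))) (s : ℝ)
    (σ : List ℕ) : ℝ :=
  ∑ j ∈ Finset.Icc 1 (n (σ.length + 1)), Metric.diam (J (σ ++ [j])) ^ s

/-- The mass distribution: `mw σ` is the product over proper prefixes of the normalized
weights `diam(J τ*j)^s / Sw τ`. -/
noncomputable def mw {N : ℕ} (n : ℕ → ℕ) (J : List ℕ → Set (EuclideanSpace ℝ (Fin N))) (s : ℝ)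
    (σ : List ℕ) : ℝ :=
  ∏ i ∈ Finset.range σ.length,
    (Metric.diam (J (σ.take (i+1))) ^ s / Sw n J s (σ.take i))

theorem mw_nil {N : ℕ} (n : ℕ → ℕ) (J : List ℕ → Set (EuclideanSpace ℝ (Fin N))) (s : ℝ) :
    mw n J s [] = 1 := by simp [mw]

theorem mw_append {N : ℕ} (n : ℕ → ℕ) (J : List ℕ → Set (EuclideanSpace ℝ (Fin N))) (s : ℝ)
    (σ : List ℕ) (j : ℕ) :
    mw n J s (σ ++ [j]) = mw n J s σ * (Metric.diam (J (σ ++ [j])) ^ s / Sw n J s σ) := by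
  have hlen : (σ ++ [j]).length = σ.length + 1 := by simp
  have htake : ∀ i ≤ σ.length, (σ ++ [j]).take i = σ.take i := fun i hi =>
    List.take_append_of_le_length hi
  have htake' : (σ ++ [j]).take (σ.length + 1) = σ ++ [j] := by
    rw [← hlen]; exact List.take_length
  rw [mw, hlen, Finset.prod_range_succ, htake', htake σ.length le_rfl, List.take_length]
  congr 1
  refine Finset.prod_congr rfl fun i hi => ?_
  rw [Finset.mem_range] at hi
  rw [htake (i+1) (by omega), htake i (by omega)]

/-- Limit along a fixed ultrafilter on `ℕ`, in `ℝ≥0∞`. -/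
noncomputable def ulim (U : Ultrafilter ℕ) (f : ℕ → ℝ≥0∞) : ℝ≥0∞ := (U.map f).lim

theorem tendsto_ulim (U : Ultrafilter ℕ) (f : ℕ → ℝ≥0∞) : Tendsto f ↑U (𝓝 (ulim U f)) :=
  (U.map f).le_nhds_lim

theorem ulim_le (U : Ultrafilter ℕ) {f : ℕ → ℝ≥0∞} {c : ℝ≥0∞} (h : ∀ᶠ j in ↑U, f j ≤ c) :
    ulim U f ≤ c := le_of_tendsto (tendsto_ulim U f) h

theorem ulim_eq (U : Ultrafilter ℕ) {f : ℕ → ℝ≥0∞} {c : ℝ≥0∞} (h : ∀ᶠ j in ↑U, f j = c) :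
    ulim U f = c :=
  tendsto_nhds_unique (tendsto_ulim U f)
    (Tendsto.congr' (by filter_upwards [h] with a ha using ha.symm) tendsto_const_nhds)

theorem ulim_mono (U : Ultrafilter ℕ) {f g : ℕ → ℝ≥0∞} (h : ∀ j, f j ≤ g j) :
    ulim U f ≤ ulim U g :=
  le_of_tendsto_of_tendsto' (tendsto_ulim U f) (tendsto_ulim U g) h

theorem ulim_add (U : Ultrafilter ℕ) (f g : ℕ → ℝ≥0∞) :
    ulim U (fun j => f j + g j) = ulim U f + ulim U g :=
  tendsto_nhds_unique (tendsto_ulim U (fun j => f j + g j))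
    ((tendsto_ulim U f).add (tendsto_ulim U g))

end Aux

/-- The mass distribution built in the proof of Proposition 2.2: there is a Borel
probability measure `μ` concentrated on the limit set `F` with
`μ(J_σ) ≤ (diam(J_σ)/diam(J_∅))^s` for every word `σ`. -/
theorem stmt_3 {N : ℕ}
    (n : ℕ → ℕ) (hn : ∀ k, 1 ≤ n k)
    (J : List ℕ → Set (EuclideanSpace ℝ (Fin N)))
    (hcpt : ∀ k : ℕ, ∀ σ ∈ Dk n k,
      (J σ).Nonempty ∧ IsCompact (J σ) ∧ 0 < Metric.diam (J σ))
    (hsub : ∀ k : ℕ, ∀ σ ∈ Dk n k, ∀ j ∈ Finset.Icc 1 (n (k + 1)), J (σ ++ [j]) ⊆ J σ)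
    (hdisj : ∀ k : ℕ, ∀ σ ∈ Dk n k, ∀ i ∈ Finset.Icc 1 (n (k + 1)),
      ∀ j ∈ Finset.Icc 1 (n (k + 1)), i ≠ j → Disjoint (J (σ ++ [i])) (J (σ ++ [j])))
    (s : ℝ) (hs : 0 < s)
    (hsum : ∀ k : ℕ, ∀ σ ∈ Dk n k,
      Metric.diam (J σ) ^ s ≤ ∑ j ∈ Finset.Icc 1 (n (k + 1)), Metric.diam (J (σ ++ [j])) ^ s)
    (F : Set (EuclideanSpace ℝ (Fin N)))
    (hF : F = ⋂ k : ℕ, ⋃ σ ∈ Dk n k, J σ) :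
    ∃ μ : MeasureTheory.Measure (EuclideanSpace ℝ (Fin N)),
      MeasureTheory.IsProbabilityMeasure μ ∧ μ F = 1 ∧
      ∀ k : ℕ, ∀ σ ∈ Dk n k,
        μ (J σ) ≤ ENNReal.ofReal
          ((Metric.diam (J σ) / Metric.diam (J ([] : List ℕ))) ^ s) := by
  classical
  let X := EuclideanSpace ℝ (Fin N)
  set d : List ℕ → ℝ := fun σ => Metric.diam (J σ) with hd
  set m : List ℕ → ℝ := mw n J s with hm
  -- basic positivity facts
  have hd0 : ∀ k, ∀ σ ∈ Dk n k, 0 < d σ := fun k σ h => (hcpt k σ h).2.2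
  have hSw_eq : ∀ k, ∀ σ ∈ Dk n k,
      Sw n J s σ = ∑ j ∈ Finset.Icc 1 (n (k+1)), d (σ ++ [j]) ^ s := by
    intro k σ h
    rw [Sw, Dk_length h]
  have hSw_pos : ∀ k, ∀ σ ∈ Dk n k, 0 < Sw n J s σ := by
    intro k σ h
    rw [hSw_eq k σ h]
    exact lt_of_lt_of_le (Real.rpow_pos_of_pos (hd0 k σ h) s) (hsum k σ h)
  have hm_pos : ∀ k, ∀ σ ∈ Dk n k, 0 < m σ := by
    intro k
    induction k with
    | zero =>
      intro σ h
      simp only [Dk, Finset.mem_singleton] at h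
      subst h; rw [hm, mw_nil]; norm_num
    | succ k ih =>
      intro σ h
      obtain ⟨τ, hτ, j, hj, rfl⟩ := mem_Dk_succ.1 h
      rw [hm, mw_append]
      exact mul_pos (ih τ hτ)
        (div_pos (Real.rpow_pos_of_pos (hd0 _ _ (append_mem_Dk hτ hj)) s) (hSw_pos k τ hτ))
  have hm_children : ∀ k, ∀ σ ∈ Dk n k,
      ∑ j ∈ Finset.Icc 1 (n (k+1)), m (σ ++ [j]) = m σ := by
    intro k σ h
    have e1 : ∀ j : ℕ, m (σ ++ [j]) = m σ * (d (σ ++ [j]) ^ s / Sw n J s σ) := by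
      intro j
      simp only [hm, hd]
      exact mw_append n J s σ j
    calc ∑ j ∈ Finset.Icc 1 (n (k+1)), m (σ ++ [j])
        = ∑ j ∈ Finset.Icc 1 (n (k+1)), m σ * (d (σ ++ [j]) ^ s / Sw n J s σ) :=
          Finset.sum_congr rfl fun j _ => e1 j
      _ = m σ * ((∑ j ∈ Finset.Icc 1 (n (k+1)), d (σ ++ [j]) ^ s) / Sw n J s σ) := by
          rw [← Finset.mul_sum, Finset.sum_div]
      _ = m σ := by rw [← hSw_eq k σ h, div_self (hSw_pos k σ h).ne', mul_one]
  have hm_total : ∀ k, ∑ σ ∈ Dk n k, m σ = 1 := by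
    intro k
    induction k with
    | zero => simp [Dk, hm, mw_nil]
    | succ k ih =>
      rw [Dk_sum (M := ℝ) m, ← ih]
      exact Finset.sum_congr rfl fun τ hτ => hm_children k τ hτ
  -- descendants of σ carry total mass m σ
  have hm_desc : ∀ k, ∀ σ ∈ Dk n k, ∀ j, k ≤ j →
      ∑ τ ∈ (Dk n j).filter (fun τ => τ.take k = σ), m τ = m σ := by
    intro k σ hσ j hkj
    induction j, hkj using Nat.le_induction with
    | base =>
      have : (Dk n k).filter (fun τ => τ.take k = σ) = {σ} := by
        apply Finset.eq_singleton_iff_unique_mem.2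
        constructor
        · exact Finset.mem_filter.2 ⟨hσ, by rw [← Dk_length hσ, List.take_length]⟩
        · intro τ hτ
          obtain ⟨h1, h2⟩ := Finset.mem_filter.1 hτ
          rw [← h2, ← Dk_length h1, List.take_length]
      rw [this, Finset.sum_singleton]
    | succ j hkj ih =>
      rw [Finset.sum_filter] at ih ⊢
      rw [Dk_sum (M := ℝ) (fun τ => if τ.take k = σ then m τ else 0), ← ih]
      refine Finset.sum_congr rfl fun ρ hρ => ?_
      have hρlen : ρ.length = j := Dk_length hρ
      have htake : ∀ i, (ρ ++ [i]).take k = ρ.take k := fun i =>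
        List.take_append_of_le_length (by omega)
      by_cases hc : ρ.take k = σ
      · simp only [htake, hc, if_true]
        exact hm_children j ρ hρ
      · simp only [htake, hc, if_false, Finset.sum_const_zero]
  -- m σ ≤ (d σ / d [])^s
  have hnil : ([] : List ℕ) ∈ Dk n 0 := by simp [Dk]
  have hm_le : ∀ k, ∀ σ ∈ Dk n k, m σ * d [] ^ s ≤ d σ ^ s := by
    intro k
    induction k with
    | zero =>
      intro σ h
      simp only [Dk, Finset.mem_singleton] at h
      subst h; rw [hm, mw_nil, one_mul]
    | succ k ih =>
      intro σ h
      obtain ⟨τ, hτ, j, hj, rfl⟩ := mem_Dk_succ.1 h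
      rw [hm, mw_append, ← hm]
      have hds : 0 < d (τ ++ [j]) ^ s :=
        Real.rpow_pos_of_pos (hd0 _ _ (append_mem_Dk hτ hj)) s
      have hSpos := hSw_pos k τ hτ
      have hdτ : d τ ^ s ≤ Sw n J s τ := by
        rw [hSw_eq k τ hτ]; exact hsum k τ hτ
      calc m τ * (d (τ ++ [j]) ^ s / Sw n J s τ) * d [] ^ s
          = (m τ * d [] ^ s) * (d (τ ++ [j]) ^ s / Sw n J s τ) := by ring
        _ ≤ d τ ^ s * (d (τ ++ [j]) ^ s / Sw n J s τ) := by
            apply mul_le_mul_of_nonneg_right (ih τ hτ) (le_of_lt (div_pos hds hSpos))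
        _ ≤ Sw n J s τ * (d (τ ++ [j]) ^ s / Sw n J s τ) :=
            mul_le_mul_of_nonneg_right hdτ (le_of_lt (div_pos hds hSpos))
        _ = d (τ ++ [j]) ^ s := by field_simp
  have hm_le' : ∀ k, ∀ σ ∈ Dk n k, m σ ≤ (d σ / d []) ^ s := by
    intro k σ h
    rw [Real.div_rpow Metric.diam_nonneg Metric.diam_nonneg]
    rw [le_div_iff₀ (Real.rpow_pos_of_pos (hd0 0 [] hnil) s)]
    exact hm_le k σ h
  -- chosen points
  set x : List ℕ → X := fun σ => if h : (J σ).Nonempty then h.some else 0 with hxdef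
  have hx : ∀ k, ∀ σ ∈ Dk n k, x σ ∈ J σ := by
    intro k σ h
    have hne := (hcpt k σ h).1
    simp only [hxdef, dif_pos hne]
    exact hne.some_mem
  -- ancestors
  have hanc : ∀ j, ∀ τ ∈ Dk n j, ∀ k, k ≤ j →
      τ.take k ∈ Dk n k ∧ J τ ⊆ J (τ.take k) := by
    intro j
    induction j with
    | zero =>
      intro τ hτ k hk
      interval_cases k
      simp only [Dk, Finset.mem_singleton] at hτ
      subst hτ; exact ⟨by simp [Dk], subset_rfl⟩
    | succ j ih =>
      intro τ hτ k hk
      obtain ⟨ρ, hρ, i, hi, rfl⟩ := mem_Dk_succ.1 hτ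
      have hρlen : ρ.length = j := Dk_length hρ
      rcases Nat.lt_or_ge k (j+1) with hlt | hge
      · have hk' : k ≤ j := by omega
        have htake : (ρ ++ [i]).take k = ρ.take k :=
          List.take_append_of_le_length (by omega)
        obtain ⟨h1, h2⟩ := ih ρ hρ k hk'
        exact ⟨htake ▸ h1, htake ▸ (hsub j ρ hρ i hi).trans h2⟩
      · have : k = j + 1 := by omega
        subst this
        have htake : (ρ ++ [i]).take (j+1) = ρ ++ [i] := by
          rw [← Dk_length hτ, List.take_length]
        exact ⟨by rw [htake]; exact hτ, by rw [htake]⟩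
  -- disjointness of same-level sets
  have hdisj' : ∀ k, ∀ σ ∈ Dk n k, ∀ τ ∈ Dk n k, σ ≠ τ → Disjoint (J σ) (J τ) := by
    intro k
    induction k with
    | zero =>
      intro σ hσ τ hτ hne
      simp only [Dk, Finset.mem_singleton] at hσ hτ
      exact absurd (hσ.trans hτ.symm) hne
    | succ k ih =>
      intro σ hσ τ hτ hne
      obtain ⟨a, ha, i, hi, rfl⟩ := mem_Dk_succ.1 hσ
      obtain ⟨b, hb, j, hj, rfl⟩ := mem_Dk_succ.1 hτ
      by_cases hab : a = b
      · subst hab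
        have hij : i ≠ j := fun h => hne (by rw [h])
        exact hdisj k a ha i hi j hj hij
      · exact (ih a ha b hb hab).mono (hsub k a ha i hi) (hsub k b hb j hj)
  -- the discrete pre-measures
  set ν : ℕ → Set X → ℝ≥0∞ := fun j A =>
    ∑ σ ∈ Dk n j, if x σ ∈ A then ENNReal.ofReal (m σ) else 0 with hνdef
  have hν_mono : ∀ j (A B : Set X), A ⊆ B → ν j A ≤ ν j B := by
    intro j A B hAB
    refine Finset.sum_le_sum fun σ _ => ?_
    by_cases hA : x σ ∈ A
    · rw [if_pos hA, if_pos (hAB hA)]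
    · rw [if_neg hA]; exact zero_le
  have hν_total : ∀ j, ∑ σ ∈ Dk n j, ENNReal.ofReal (m σ) = 1 := by
    intro j
    rw [← ENNReal.ofReal_sum_of_nonneg (fun σ hσ => (hm_pos j σ hσ).le), hm_total j,
      ENNReal.ofReal_one]
  have hν_le_one : ∀ j (A : Set X), ν j A ≤ 1 := by
    intro j A
    calc ν j A ≤ ∑ σ ∈ Dk n j, ENNReal.ofReal (m σ) :=
          Finset.sum_le_sum fun σ _ => by split <;> simp
      _ = 1 := hν_total j
  have hν_union : ∀ j (A B : Set X), Disjoint A B → ν j (A ∪ B) = ν j A + ν j B := by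
    intro j A B hAB
    rw [hνdef]
    simp only [← Finset.sum_add_distrib]
    refine Finset.sum_congr rfl fun σ _ => ?_
    by_cases hA : x σ ∈ A
    · have hB : x σ ∉ B := fun hB => (Set.disjoint_left.1 hAB hA) hB
      rw [if_pos (Set.mem_union_left _ hA), if_pos hA, if_neg hB, add_zero]
    · by_cases hB : x σ ∈ B
      · rw [if_pos (Set.mem_union_right _ hB), if_neg hA, if_pos hB, zero_add]
      · rw [if_neg (fun h => h.elim hA hB), if_neg hA, if_neg hB, add_zero]
  have hν_union_le : ∀ j (A B : Set X), ν j (A ∪ B) ≤ ν j A + ν j B := by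
    intro j A B
    rw [hνdef]
    simp only [← Finset.sum_add_distrib]
    refine Finset.sum_le_sum fun σ _ => ?_
    by_cases hA : x σ ∈ A
    · rw [if_pos hA]; split <;> simp [le_add_right]
    · by_cases hB : x σ ∈ B
      · rw [if_pos hB, if_neg hA, zero_add]; split <;> simp
      · rw [if_neg (fun h => h.elim hA hB)]; exact zero_le
  -- the ultrafilter limit content
  set U : Ultrafilter ℕ := Ultrafilter.of atTop with hUdef
  have hU_atTop : (U : Filter ℕ) ≤ atTop := Ultrafilter.of_le _
  set ℓ : Set X → ℝ≥0∞ := fun A => ulim U (fun j => ν j A) with hℓdef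
  have hℓ_le_one : ∀ A, ℓ A ≤ 1 := fun A =>
    ulim_le U (Eventually.of_forall fun j => hν_le_one j A)
  have hℓ_ne_top : ∀ A, ℓ A ≠ ⊤ := fun A => (lt_of_le_of_lt (hℓ_le_one A) ENNReal.one_lt_top).ne
  set Λ : MeasureTheory.Content X :=
    { toFun := fun K => (ℓ K).toNNReal
      mono' := fun K₁ K₂ h =>
        ENNReal.toNNReal_mono (hℓ_ne_top _) (ulim_mono U fun j => hν_mono j _ _ h)
      sup_disjoint' := by
        intro K₁ K₂ hd12 _ _
        have : ℓ (↑K₁ ∪ ↑K₂) = ℓ ↑K₁ + ℓ ↑K₂ := by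
          rw [hℓdef]
          simp only
          rw [← ulim_add U]
          exact congrArg (ulim U) (funext fun j => hν_union j _ _ hd12)
        simp only [TopologicalSpace.Compacts.coe_sup]
        rw [this, ENNReal.toNNReal_add (hℓ_ne_top _) (hℓ_ne_top _)]
      sup_le' := by
        intro K₁ K₂
        have h1 : ℓ (↑K₁ ∪ ↑K₂) ≤ ℓ ↑K₁ + ℓ ↑K₂ := by
          rw [hℓdef]
          simp only
          rw [← ulim_add U]
          exact ulim_mono U fun j => hν_union_le j _ _
        simp only [TopologicalSpace.Compacts.coe_sup]
        calc (ℓ (↑K₁ ∪ ↑K₂)).toNNReal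
            ≤ (ℓ ↑K₁ + ℓ ↑K₂).toNNReal := ENNReal.toNNReal_mono
              (ENNReal.add_ne_top.2 ⟨hℓ_ne_top _, hℓ_ne_top _⟩) h1
          _ = (ℓ ↑K₁).toNNReal + (ℓ ↑K₂).toNNReal :=
              ENNReal.toNNReal_add (hℓ_ne_top _) (hℓ_ne_top _) } with hΛdef
  have hΛ : ∀ K : TopologicalSpace.Compacts X, (Λ K : ℝ≥0∞) = ℓ ↑K := by
    intro K
    exact ENNReal.coe_toNNReal (hℓ_ne_top _)
  set μ : MeasureTheory.Measure X := Λ.measure with hμdef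
  -- the level-k union
  set C : ℕ → Set X := fun k => ⋃ σ ∈ Dk n k, J σ with hCdef
  have hC_cpt : ∀ k, IsCompact (C k) :=
    fun k => (Dk n k).finite_toSet.isCompact_biUnion fun σ hσ => (hcpt k σ hσ).2.1
  have hC_closed : ∀ k, IsClosed (C k) :=
    fun k => (Dk n k).finite_toSet.isClosed_biUnion fun σ hσ => ((hcpt k σ hσ).2.1).isClosed
  have hC_anti : ∀ k, C (k+1) ⊆ C k := by
    intro k
    refine Set.iUnion₂_subset fun σ hσ => ?_
    obtain ⟨τ, hτ, j, hj, rfl⟩ := mem_Dk_succ.1 hσ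
    exact (hsub k τ hτ j hj).trans (Set.subset_biUnion_of_mem hτ)
  have hC_anti' : Antitone C := antitone_nat_of_succ_le hC_anti
  have hν_C : ∀ k j, k ≤ j → ν j (C k) = 1 := by
    intro k j hkj
    rw [hνdef]
    simp only
    rw [← hν_total j]
    refine Finset.sum_congr rfl fun τ hτ => ?_
    have hmem : x τ ∈ C k := by
      obtain ⟨h1, h2⟩ := hanc j τ hτ k hkj
      exact Set.mem_biUnion h1 (h2 (hx j τ hτ))
    rw [if_pos hmem]
  have hℓ_C : ∀ k, ℓ (C k) = 1 := by
    intro k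
    refine ulim_eq U ?_
    filter_upwards [hU_atTop (eventually_ge_atTop k)] with j hj
    exact hν_C k j hj
  -- total mass at most one
  have hμ_univ_le : μ Set.univ ≤ 1 := by
    rw [hμdef, Λ.measure_apply MeasurableSet.univ,
      Λ.outerMeasure_of_isOpen Set.univ isOpen_univ]
    refine iSup₂_le fun K _ => ?_
    exact (hΛ K).trans_le (hℓ_le_one _)
  -- μ F = 1
  have hF_closed : IsClosed F := by
    rw [hF]; exact isClosed_iInter fun k => hC_closed k
  have hμF_ge : 1 ≤ μ F := by
    rw [hμdef, Λ.measure_apply hF_closed.measurableSet, Λ.outerMeasure_eq_iInf]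
    refine le_iInf fun V => le_iInf fun hV => le_iInf fun hFV => ?_
    have hdir : Directed (· ⊇ ·) C := fun i j =>
      ⟨max i j, hC_anti' (le_max_left i j), hC_anti' (le_max_right i j)⟩
    have hFC : ⋂ k, C k = F := by rw [hF]
    obtain ⟨k, hk⟩ := exists_subset_nhds_of_isCompact' hdir hC_cpt hC_closed
      (fun y hy => hV.mem_nhds (hFV (hFC ▸ hy)))
    have h1 : (1 : ℝ≥0∞) = Λ ⟨C k, hC_cpt k⟩ := by
      rw [hΛ]; exact (hℓ_C k).symm
    rw [h1]
    exact Λ.le_innerContent ⟨C k, hC_cpt k⟩ ⟨V, hV⟩ hk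
  have hμF_le : μ F ≤ 1 := le_trans (measure_mono (Set.subset_univ F)) hμ_univ_le
  have hμF : μ F = 1 := le_antisymm hμF_le hμF_ge
  have hμ_univ : μ Set.univ = 1 :=
    le_antisymm hμ_univ_le (hμF_ge.trans (measure_mono (Set.subset_univ F)))
  -- the key estimate
  have hkey : ∀ k, ∀ σ ∈ Dk n k, μ (J σ) ≤ ENNReal.ofReal (m σ) := by
    intro k σ hσ
    set T : Set X := ⋃ τ ∈ (Dk n k).erase σ, J τ with hTdef
    have hT_closed : IsClosed T :=
      ((Dk n k).erase σ).finite_toSet.isClosed_biUnion fun τ hτ =>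
        ((hcpt k τ (Finset.mem_of_mem_erase hτ)).2.1).isClosed
    have hJT : J σ ⊆ Tᶜ := by
      intro y hy hyT
      obtain ⟨τ, hτ, hyτ⟩ := Set.mem_iUnion₂.1 hyT
      have hne : σ ≠ τ := fun h => (Finset.ne_of_mem_erase hτ) h.symm
      exact Set.disjoint_left.1
        (hdisj' k σ hσ τ (Finset.mem_of_mem_erase hτ) hne) hy hyτ
    have hstep : μ (J σ) ≤ Λ.outerMeasure Tᶜ := by
      calc μ (J σ) ≤ μ Tᶜ := measure_mono hJT
        _ = Λ.outerMeasure Tᶜ := by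
            rw [hμdef]; exact Λ.measure_apply hT_closed.isOpen_compl.measurableSet
    refine hstep.trans ?_
    rw [Λ.outerMeasure_of_isOpen Tᶜ hT_closed.isOpen_compl]
    refine iSup₂_le fun K hK => ?_
    refine le_trans (le_of_eq (hΛ K)) (ulim_le U ?_)
    filter_upwards [hU_atTop (eventually_ge_atTop k)] with j hj
    calc ν j ↑K
        ≤ ∑ τ ∈ Dk n j, if τ.take k = σ then ENNReal.ofReal (m τ) else 0 := by
          refine Finset.sum_le_sum fun τ hτ => ?_
          by_cases hxK : x τ ∈ (K : Set X)
          · have htk : τ.take k = σ := by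
              obtain ⟨h1, h2⟩ := hanc j τ hτ k hj
              by_contra hne
              have : x τ ∈ T :=
                Set.mem_biUnion (Finset.mem_erase.2 ⟨hne, h1⟩) (h2 (hx j τ hτ))
              exact (hK hxK) this
            rw [if_pos hxK, if_pos htk]
          · rw [if_neg hxK]; exact zero_le
      _ = ENNReal.ofReal (m σ) := by
          rw [← Finset.sum_filter,
            ← ENNReal.ofReal_sum_of_nonneg
              (fun τ hτ => (hm_pos j τ (Finset.mem_filter.1 hτ).1).le),
            hm_desc k σ hσ j hj]
  refine ⟨μ, ⟨hμ_univ⟩, hμF, fun k σ hσ => ?_⟩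
  exact (hkey k σ hσ).trans (ENNReal.ofReal_le_ofReal (hm_le' k σ hσ))
end

section
/- In the setting of an F-limit set F built from an assignment σ ↦ f_σ of m-tuples of compressions on a collection 𝒳 of nonempty compact subsets of a metric space, let s > 0. If sup_{σ∈D} ||U_σ||_s < 1, then dim_H(F) ≤ s. -/
/-- `Uof 𝒳 g = sup_{E ∈ 𝒳} diam(g E) / diam E`. -/
noncomputable def Uof {X : Type*} [MetricSpace X] (𝒳 : Set (Set X)) (g : Set X → Set X) : ℝ :=
  sSup ((fun E => Metric.diam (g E) / Metric.diam E) '' 𝒳)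

/-- `Lof 𝒳 g = inf_{E ∈ 𝒳} diam(g E) / diam E`. -/
noncomputable def Lof {X : Type*} [MetricSpace X] (𝒳 : Set (Set X)) (g : Set X → Set X) : ℝ :=
  sInf ((fun E => Metric.diam (g E) / Metric.diam E) '' 𝒳)

/-- `pnorm s x = (∑ i |x i|^s)^(1/s)`. -/
noncomputable def pnorm {m : ℕ} (s : ℝ) (x : Fin m → ℝ) : ℝ :=
  (∑ i, |x i| ^ s) ^ (1 / s)

open Filter MeasureTheory Measure Topology NNReal ENNReal in
/-- Theorem 4.2(b): if `sup_{σ ∈ D} ‖U_σ‖_s < 1` then `dim_H F ≤ s`. -/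
theorem stmt_5 {X : Type*} [MetricSpace X] (m : ℕ) (hm : 2 ≤ m)
    (𝒳 : Set (Set (X)))
    (h𝒳 : ∀ E ∈ 𝒳, E.Nonempty ∧ IsCompact E ∧ 0 < Metric.diam E)
    (f : List (Fin m) → Fin m → Set (X) → Set (X))
    (hf : ∀ (σ : List (Fin m)) (j : Fin m), ∀ E ∈ 𝒳, f σ j E ∈ 𝒳 ∧ f σ j E ⊆ E)
    (E₀ : Set (X)) (hE₀ : E₀ ∈ 𝒳)
    (J : List (Fin m) → Set (X))
    (hJnil : J [] = E₀)
    (hJ : ∀ (σ : List (Fin m)) (j : Fin m), J (σ ++ [j]) = f σ j (J σ))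
    (F : Set (X))
    (hF : F = ⋂ (k : ℕ) (_ : 1 ≤ k), ⋃ (σ : List (Fin m)) (_ : σ.length = k), J σ)
    (s : ℝ) (hs : 0 < s)
    (hsup : (⨆ σ : List (Fin m), pnorm s (fun j => Uof 𝒳 (f σ j))) < 1) :
    dimH F ≤ ENNReal.ofReal s := by
  borelize X
  have hXne : 𝒳.Nonempty := ⟨E₀, hE₀⟩
  -- every J σ lies in 𝒳
  have hJmem : ∀ σ : List (Fin m), J σ ∈ 𝒳 := by
    intro σ
    induction σ using List.reverseRecOn with
    | nil => rw [hJnil]; exact hE₀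
    | append_singleton τ j ih => rw [hJ]; exact (hf τ j _ ih).1
  -- U values are in [0,1]
  have hbdd1 : ∀ σ j, ∀ r ∈ (fun E => Metric.diam (f σ j E) / Metric.diam E) '' 𝒳, r ≤ 1 := by
    rintro σ j r ⟨E, hE, rfl⟩
    have h2 : Metric.diam (f σ j E) ≤ Metric.diam E :=
      Metric.diam_mono (hf σ j E hE).2 (h𝒳 E hE).2.1.isBounded
    exact div_le_one_of_le₀ h2 Metric.diam_nonneg
  have hU0 : ∀ σ j, 0 ≤ Uof 𝒳 (f σ j) := by
    intro σ j
    obtain ⟨E, hE⟩ := hXne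
    exact le_csSup_of_le ⟨1, hbdd1 σ j⟩ ⟨E, hE, rfl⟩
      (div_nonneg Metric.diam_nonneg Metric.diam_nonneg)
  have hU1 : ∀ σ j, Uof 𝒳 (f σ j) ≤ 1 := fun σ j => csSup_le (hXne.image _) (hbdd1 σ j)
  -- the key diameter estimate
  have hdiam : ∀ σ j, ∀ E ∈ 𝒳, Metric.diam (f σ j E) ≤ Uof 𝒳 (f σ j) * Metric.diam E := by
    intro σ j E hE
    have hpos := (h𝒳 E hE).2.2
    have hle : Metric.diam (f σ j E) / Metric.diam E ≤ Uof 𝒳 (f σ j) :=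
      le_csSup ⟨1, hbdd1 σ j⟩ ⟨E, hE, rfl⟩
    calc Metric.diam (f σ j E) = Metric.diam (f σ j E) / Metric.diam E * Metric.diam E := by
          field_simp
      _ ≤ Uof 𝒳 (f σ j) * Metric.diam E := by
          exact mul_le_mul_of_nonneg_right hle Metric.diam_nonneg
  -- properties of c
  set c : ℝ := ⨆ σ : List (Fin m), pnorm s (fun j => Uof 𝒳 (f σ j)) with hcdef
  have hpnonneg : ∀ σ : List (Fin m), 0 ≤ pnorm s (fun j => Uof 𝒳 (f σ j)) := fun σ =>
    Real.rpow_nonneg (Finset.sum_nonneg fun i _ => Real.rpow_nonneg (abs_nonneg _) s) _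
  have hbddrange : BddAbove (Set.range fun σ : List (Fin m) =>
      pnorm s (fun j => Uof 𝒳 (f σ j))) := by
    refine ⟨(m : ℝ) ^ (1 / s), ?_⟩
    rintro x ⟨σ, rfl⟩
    unfold pnorm
    refine Real.rpow_le_rpow (Finset.sum_nonneg fun i _ => Real.rpow_nonneg (abs_nonneg _) s)
      ?_ (by positivity)
    calc ∑ i, |Uof 𝒳 (f σ i)| ^ s ≤ ∑ _i : Fin m, (1 : ℝ) := by
          refine Finset.sum_le_sum fun i _ => ?_
          rw [abs_of_nonneg (hU0 σ i)]
          exact Real.rpow_le_one (hU0 σ i) (hU1 σ i) hs.le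
      _ = (m : ℝ) := by simp
  have hc0 : 0 ≤ c := (hpnonneg []).trans (le_ciSup hbddrange [])
  have hc1 : c < 1 := hsup
  -- sum of U^s over one level is at most c^s
  have hsum_s : ∀ σ : List (Fin m), (∑ j, Uof 𝒳 (f σ j) ^ s) ≤ c ^ s := by
    intro σ
    have h1 : pnorm s (fun j => Uof 𝒳 (f σ j)) ≤ c := le_ciSup hbddrange σ
    have h2 : (∑ j, Uof 𝒳 (f σ j) ^ s) = pnorm s (fun j => Uof 𝒳 (f σ j)) ^ s := by
      unfold pnorm
      rw [← Real.rpow_mul (Finset.sum_nonneg fun i _ => Real.rpow_nonneg (abs_nonneg _) s),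
        one_div, inv_mul_cancel₀ hs.ne', Real.rpow_one]
      exact Finset.sum_congr rfl fun i _ => by rw [abs_of_nonneg (hU0 σ i)]
    rw [h2]
    exact Real.rpow_le_rpow (hpnonneg σ) h1 hs.le
  -- each U is at most c
  have hUc : ∀ σ j, Uof 𝒳 (f σ j) ≤ c := by
    intro σ j
    have h1 : Uof 𝒳 (f σ j) ^ s ≤ c ^ s :=
      le_trans (Finset.single_le_sum (fun i _ => Real.rpow_nonneg (hU0 σ i) s)
        (Finset.mem_univ j)) (hsum_s σ)
    exact (Real.rpow_le_rpow_iff (hU0 σ j) hc0 hs).mp h1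
  -- diameter of J σ decays geometrically
  have hdiamJ : ∀ σ : List (Fin m), Metric.diam (J σ) ≤ Metric.diam E₀ * c ^ σ.length := by
    intro σ
    induction σ using List.reverseRecOn with
    | nil => simp [hJnil]
    | append_singleton τ j ih =>
      rw [hJ]
      calc Metric.diam (f τ j (J τ)) ≤ Uof 𝒳 (f τ j) * Metric.diam (J τ) :=
            hdiam τ j _ (hJmem τ)
        _ ≤ c * (Metric.diam E₀ * c ^ τ.length) :=
            mul_le_mul (hUc τ j) ih Metric.diam_nonneg hc0
        _ = Metric.diam E₀ * c ^ (τ ++ [j]).length := by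
            simp [pow_succ]; ring
  haveI instF : ∀ n : ℕ, Fintype {σ : List (Fin m) // σ.length = n} := fun n =>
    inferInstanceAs (Fintype (List.Vector (Fin m) n))
  set S : ℕ → ℝ := fun k => ∑ σ : {σ : List (Fin m) // σ.length = k},
    Metric.diam (J σ.val) ^ s with hSdef
  have hSnonneg : ∀ τ : List (Fin m), (0:ℝ) ≤ Metric.diam (J τ) ^ s := fun τ =>
    Real.rpow_nonneg Metric.diam_nonneg s
  -- recursion
  have hSstep : ∀ k, S (k + 1) ≤ c ^ s * S k := by
    intro k
    have key : S (k + 1) = ∑ p : {σ : List (Fin m) // σ.length = k} × Fin m,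
        Metric.diam (J (p.1.val ++ [p.2])) ^ s := by
      refine (Fintype.sum_bijective
        (fun p : {σ : List (Fin m) // σ.length = k} × Fin m =>
          (⟨p.1.val ++ [p.2], by simp [p.1.2]⟩ : {σ : List (Fin m) // σ.length = k + 1}))
        ⟨?_, ?_⟩ _ _ (fun p => rfl)).symm
      · rintro ⟨⟨τ₁, h₁⟩, j₁⟩ ⟨⟨τ₂, h₂⟩, j₂⟩ h
        simp only [Subtype.mk.injEq] at h
        obtain ⟨h3, h4⟩ := List.append_inj' h (by simp)
        simp_all
      · rintro ⟨σ, hσ⟩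
        have hne : σ ≠ [] := by intro h; simp [h] at hσ
        refine ⟨⟨⟨σ.dropLast, by simp [hσ]⟩, σ.getLast hne⟩, ?_⟩
        simp [List.dropLast_append_getLast hne]
    rw [key, Fintype.sum_prod_type]
    calc ∑ τ : {σ : List (Fin m) // σ.length = k}, ∑ j,
          Metric.diam (J (τ.val ++ [j])) ^ s
        ≤ ∑ τ : {σ : List (Fin m) // σ.length = k}, ∑ j,
          (Uof 𝒳 (f τ.val j) * Metric.diam (J τ.val)) ^ s := by
          refine Finset.sum_le_sum fun τ _ => Finset.sum_le_sum fun j _ => ?_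
          rw [hJ]
          exact Real.rpow_le_rpow Metric.diam_nonneg (hdiam τ.val j _ (hJmem τ.val)) hs.le
      _ = ∑ τ : {σ : List (Fin m) // σ.length = k},
          (∑ j, Uof 𝒳 (f τ.val j) ^ s) * Metric.diam (J τ.val) ^ s := by
          refine Finset.sum_congr rfl fun τ _ => ?_
          rw [Finset.sum_mul]
          exact Finset.sum_congr rfl fun j _ =>
            Real.mul_rpow (hU0 τ.val j) Metric.diam_nonneg
      _ ≤ ∑ τ : {σ : List (Fin m) // σ.length = k},
          c ^ s * Metric.diam (J τ.val) ^ s := by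
          exact Finset.sum_le_sum fun τ _ =>
            mul_le_mul_of_nonneg_right (hsum_s τ.val) (hSnonneg τ.val)
      _ = c ^ s * S k := by rw [← Finset.mul_sum]
  have hS0 : S 0 = Metric.diam E₀ ^ s := by
    have huniq : ∀ σ : {σ : List (Fin m) // σ.length = 0}, σ = ⟨[], rfl⟩ := by
      rintro ⟨σ, hσ⟩
      simp [List.length_eq_zero_iff.mp hσ]
    letI : Unique {σ : List (Fin m) // σ.length = 0} := ⟨⟨⟨[], rfl⟩⟩, huniq⟩
    rw [hSdef]
    simp only [Fintype.sum_unique]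
    show Metric.diam (J []) ^ s = _
    rw [hJnil]
  have hcs0 : (0:ℝ) ≤ c ^ s := Real.rpow_nonneg hc0 s
  have hSk : ∀ k, S k ≤ Metric.diam E₀ ^ s * (c ^ s) ^ k := by
    intro k
    induction k with
    | zero => simp [hS0]
    | succ k ih =>
      calc S (k + 1) ≤ c ^ s * S k := hSstep k
        _ ≤ c ^ s * (Metric.diam E₀ ^ s * (c ^ s) ^ k) := by
            exact mul_le_mul_of_nonneg_left ih hcs0
        _ = Metric.diam E₀ ^ s * (c ^ s) ^ (k + 1) := by ring
  -- the Hausdorff measure vanishes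
  have hcs1 : c ^ s < 1 := Real.rpow_lt_one hc0 hc1 hs
  have hμ : μH[s] F = 0 := by
    refine le_antisymm ?_ zero_le
    have hcov : ∀ n : ℕ, F ⊆ ⋃ σ : {σ : List (Fin m) // σ.length = n + 1}, J σ.val := by
      intro n x hx
      rw [hF] at hx
      have hx2 := Set.mem_iInter.1 (Set.mem_iInter.1 hx (n + 1)) (by omega)
      simp only [Set.mem_iUnion] at hx2
      obtain ⟨σ, hσ, hxσ⟩ := hx2
      exact Set.mem_iUnion.2 ⟨⟨σ, hσ⟩, hxσ⟩
    have hr : Tendsto (fun n : ℕ => ENNReal.ofReal (Metric.diam E₀ * c ^ (n + 1)))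
        atTop (𝓝 0) := by
      rw [← ENNReal.ofReal_zero]
      apply ENNReal.tendsto_ofReal
      have h1 : Tendsto (fun n : ℕ => c ^ n) atTop (𝓝 0) :=
        tendsto_pow_atTop_nhds_zero_of_lt_one hc0 hc1
      have h2 := (h1.comp (tendsto_add_atTop_nat 1)).const_mul (Metric.diam E₀)
      simpa [Function.comp] using h2
    have hdiamcond : ∀ n : ℕ, ∀ σ : {σ : List (Fin m) // σ.length = n + 1},
        EMetric.diam (J σ.val) ≤ ENNReal.ofReal (Metric.diam E₀ * c ^ (n + 1)) := by
      intro n σ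
      have h1 : Metric.diam (J σ.val) ≤ Metric.diam E₀ * c ^ (n + 1) := by
        have := hdiamJ σ.val
        rwa [σ.2] at this
      have hb : EMetric.diam (J σ.val) ≠ ⊤ :=
        (h𝒳 _ (hJmem σ.val)).2.1.isBounded.ediam_ne_top
      calc EMetric.diam (J σ.val) = ENNReal.ofReal (Metric.diam (J σ.val)) := by
            rw [Metric.diam]; exact (ENNReal.ofReal_toReal hb).symm
        _ ≤ _ := ENNReal.ofReal_le_ofReal h1
    have hle := hausdorffMeasure_le_liminf_sum s F
      (fun n : ℕ => ENNReal.ofReal (Metric.diam E₀ * c ^ (n + 1))) hr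
      (fun n (σ : {σ : List (Fin m) // σ.length = n + 1}) => J σ.val)
      (Filter.Eventually.of_forall hdiamcond) (Filter.Eventually.of_forall hcov)
    refine le_trans hle ?_
    have heq : ∀ n : ℕ, (∑ σ : {σ : List (Fin m) // σ.length = n + 1},
        EMetric.diam (J σ.val) ^ s) = ENNReal.ofReal (S (n + 1)) := by
      intro n
      rw [hSdef, ENNReal.ofReal_sum_of_nonneg fun τ _ => hSnonneg τ.val]
      refine Finset.sum_congr rfl fun σ _ => ?_
      have hb : EMetric.diam (J σ.val) ≠ ⊤ :=
        (h𝒳 _ (hJmem σ.val)).2.1.isBounded.ediam_ne_top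
      rw [show EMetric.diam (J σ.val) = ENNReal.ofReal (Metric.diam (J σ.val)) by
        rw [Metric.diam]; exact (ENNReal.ofReal_toReal hb).symm]
      rw [← ENNReal.ofReal_rpow_of_nonneg Metric.diam_nonneg hs.le]
    calc liminf (fun n : ℕ => ∑ σ : {σ : List (Fin m) // σ.length = n + 1},
          EMetric.diam (J σ.val) ^ s) atTop
        ≤ liminf (fun n : ℕ =>
            ENNReal.ofReal (Metric.diam E₀ ^ s * (c ^ s) ^ (n + 1))) atTop := by
          refine liminf_le_liminf (Filter.Eventually.of_forall fun n => ?_)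
          rw [heq n]
          exact ENNReal.ofReal_le_ofReal (hSk (n + 1))
      _ = 0 := by
          have h1 : Tendsto (fun n : ℕ =>
              ENNReal.ofReal (Metric.diam E₀ ^ s * (c ^ s) ^ (n + 1))) atTop (𝓝 0) := by
            rw [← ENNReal.ofReal_zero]
            apply ENNReal.tendsto_ofReal
            have h2 : Tendsto (fun n : ℕ => (c ^ s) ^ n) atTop (𝓝 0) :=
              tendsto_pow_atTop_nhds_zero_of_lt_one hcs0 hcs1
            have h3 := (h2.comp (tendsto_add_atTop_nat 1)).const_mul (Metric.diam E₀ ^ s)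
            simpa [Function.comp] using h3
          exact h1.liminf_eq
  -- conclude
  have hd : dimH F ≤ (s.toNNReal : ℝ≥0∞) := by
    refine dimH_le_of_hausdorffMeasure_ne_top (d := s.toNNReal) ?_
    rw [show ((s.toNNReal : ℝ≥0) : ℝ) = s from Real.coe_toNNReal s hs.le, hμ]
    exact ENNReal.zero_ne_top
  simpa [ENNReal.ofReal] using hd
end

section
/- In the setting of an F-limit set F built from an assignment σ ↦ f_σ of m-tuples of compressions on a collection 𝒳 of nonempty compact subsets of a metric space, let r = (r_1,...,r_m) ∈ (0,1)^m and let s^* > 0 be the unique solution of r_1^{s^*} + r_2^{s^*} + ... + r_m^{s^*} = 1. If U_σ ≤ r coordinatewise for every σ ∈ D, then dim_H(F) ≤ s^*. -/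
open MeasureTheory
open scoped ENNReal NNReal


/-- Corollary 4.5(b): if `U_σ ≤ r` coordinatewise for all `σ`, where `r ∈ (0,1)^m` and `∑ r_i^{s^*} = 1`, then `dim_H F ≤ s^*`. -/
theorem stmt_8 {X : Type*} [MetricSpace X] (m : ℕ) (hm : 2 ≤ m)
    (𝒳 : Set (Set (X)))
    (h𝒳 : ∀ E ∈ 𝒳, E.Nonempty ∧ IsCompact E ∧ 0 < Metric.diam E)
    (f : List (Fin m) → Fin m → Set (X) → Set (X))
    (hf : ∀ (σ : List (Fin m)) (j : Fin m), ∀ E ∈ 𝒳, f σ j E ∈ 𝒳 ∧ f σ j E ⊆ E)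
    (E₀ : Set (X)) (hE₀ : E₀ ∈ 𝒳)
    (J : List (Fin m) → Set (X))
    (hJnil : J [] = E₀)
    (hJ : ∀ (σ : List (Fin m)) (j : Fin m), J (σ ++ [j]) = f σ j (J σ))
    (F : Set (X))
    (hF : F = ⋂ (k : ℕ) (_ : 1 ≤ k), ⋃ (σ : List (Fin m)) (_ : σ.length = k), J σ)
    (r : Fin m → ℝ) (hr : ∀ i, r i ∈ Set.Ioo (0 : ℝ) 1)
    (sStar : ℝ) (hsStar : 0 < sStar)
    (hsol : ∑ i, r i ^ sStar = 1)
    (hU : ∀ (σ : List (Fin m)) (i : Fin m), Uof 𝒳 (f σ i) ≤ r i) :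
    dimH F ≤ ENNReal.ofReal sStar := by
  have hm0 : 0 < m := by omega
  borelize X
  haveI : NeZero m := ⟨by omega⟩
  -- the maximum of the r i
  set c : ℝ := Finset.univ.sup' (Finset.univ_nonempty (α := Fin m)) r with hc
  have hrc : ∀ i, r i ≤ c := fun i => Finset.le_sup' r (Finset.mem_univ i)
  obtain ⟨i₀, -, hi₀⟩ := Finset.exists_mem_eq_sup' (Finset.univ_nonempty (α := Fin m)) r
  have hc0 : 0 < c := by rw [hc, hi₀]; exact (hr i₀).1
  have hc1 : c < 1 := by rw [hc, hi₀]; exact (hr i₀).2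
  have hD0 : 0 < Metric.diam E₀ := (h𝒳 E₀ hE₀).2.2
  set D : ℝ := Metric.diam E₀ with hD
  -- main induction: J σ ∈ 𝒳 and diameter bound
  have key : ∀ σ : List (Fin m), J σ ∈ 𝒳 ∧ Metric.diam (J σ) ≤ D * (σ.map r).prod := by
    intro σ
    induction σ using List.reverseRecOn with
    | nil => exact ⟨by rw [hJnil]; exact hE₀, by simp [hJnil, hD]⟩
    | append_singleton σ j ih =>
      obtain ⟨hmem, hdiam⟩ := ih
      have hmem' : f σ j (J σ) ∈ 𝒳 := (hf σ j (J σ) hmem).1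
      have hJσpos : 0 < Metric.diam (J σ) := (h𝒳 _ hmem).2.2
      -- the ratio set is bounded above by 1
      have hbdd : BddAbove ((fun E => Metric.diam (f σ j E) / Metric.diam E) '' 𝒳) := by
        refine ⟨1, ?_⟩
        rintro x ⟨E, hE, rfl⟩
        have hEpos : 0 < Metric.diam E := (h𝒳 E hE).2.2
        have : Metric.diam (f σ j E) ≤ Metric.diam E :=
          Metric.diam_mono (hf σ j E hE).2 (h𝒳 E hE).2.1.isBounded
        exact div_le_one_of_le₀ this hEpos.le
      have hratio : Metric.diam (f σ j (J σ)) / Metric.diam (J σ) ≤ r j :=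
        le_trans (le_csSup hbdd ⟨J σ, hmem, rfl⟩) (hU σ j)
      have hstep : Metric.diam (f σ j (J σ)) ≤ r j * Metric.diam (J σ) := by
        rw [div_le_iff₀ hJσpos] at hratio; linarith
      refine ⟨by rw [hJ σ j]; exact hmem', ?_⟩
      rw [hJ σ j, List.map_append, List.prod_append]
      simp only [List.map_cons, List.map_nil, List.prod_cons, List.prod_nil, mul_one]
      calc Metric.diam (f σ j (J σ)) ≤ r j * Metric.diam (J σ) := hstep
        _ ≤ r j * (D * (σ.map r).prod) := by
            exact mul_le_mul_of_nonneg_left hdiam (hr j).1.le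
        _ = D * ((σ.map r).prod * r j) := by ring
  -- products over lists of length n are ≤ c^n
  have hprod_le : ∀ (n : ℕ) (g : Fin n → Fin m), ((List.ofFn g).map r).prod ≤ c ^ n := by
    intro n g
    rw [List.map_ofFn, List.prod_ofFn]
    calc ∏ i : Fin n, r (g i) ≤ ∏ _i : Fin n, c :=
          Finset.prod_le_prod (fun i _ => (hr (g i)).1.le) (fun i _ => hrc (g i))
      _ = c ^ n := by simp
  have hprod_pos : ∀ (n : ℕ) (g : Fin n → Fin m), 0 < ((List.ofFn g).map r).prod := by
    intro n g
    rw [List.map_ofFn, List.prod_ofFn]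
    exact Finset.prod_pos fun i _ => (hr (g i)).1
  -- covering sets
  set t : (n : ℕ) → (Fin n → Fin m) → Set X := fun n g => J (List.ofFn g) with ht
  set R : ℕ → ENNReal := fun n => ENNReal.ofReal (D * c ^ n) with hR
  have hRtendsto : Filter.Tendsto R Filter.atTop (nhds 0) := by
    rw [hR]
    have : Filter.Tendsto (fun n : ℕ => D * c ^ n) Filter.atTop (nhds 0) := by
      simpa using (tendsto_pow_atTop_nhds_zero_of_lt_one hc0.le hc1).const_mul D
    simpa using (ENNReal.tendsto_ofReal this)
  have hediam : ∀ σ : List (Fin m), EMetric.diam (J σ) = ENNReal.ofReal (Metric.diam (J σ)) := by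
    intro σ
    have hb : Bornology.IsBounded (J σ) := (h𝒳 _ (key σ).1).2.1.isBounded
    rw [Metric.diam, ENNReal.ofReal_toReal hb.ediam_ne_top]; rfl
  have htdiam : ∀ (n : ℕ) (g : Fin n → Fin m), EMetric.diam (t n g) ≤ R n := by
    intro n g
    rw [ht, hediam, hR]
    refine ENNReal.ofReal_le_ofReal ?_
    calc Metric.diam (J (List.ofFn g)) ≤ D * ((List.ofFn g).map r).prod :=
          (key (List.ofFn g)).2
      _ ≤ D * c ^ n := mul_le_mul_of_nonneg_left (hprod_le n g) hD0.le
  have hcover : ∀ᶠ n in Filter.atTop, F ⊆ ⋃ g : Fin n → Fin m, t n g := by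
    filter_upwards [Filter.eventually_ge_atTop 1] with n hn
    intro x hx
    rw [hF] at hx
    have hx' : x ∈ ⋃ (σ : List (Fin m)) (_ : σ.length = n), J σ := by
      exact Set.mem_iInter.1 (Set.mem_iInter.1 hx n) hn
    obtain ⟨σ, hσ⟩ := Set.mem_iUnion.1 hx'
    obtain ⟨hlen, hxσ⟩ := Set.mem_iUnion.1 hσ
    subst hlen
    refine Set.mem_iUnion.2 ⟨σ.get, ?_⟩
    rw [ht]
    simpa [List.ofFn_get] using hxσ
  -- the sum bound
  have hsum : ∀ n : ℕ, ∑ g : Fin n → Fin m, EMetric.diam (t n g) ^ sStar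
      ≤ ENNReal.ofReal (D ^ sStar) := by
    intro n
    have hle : ∀ g : Fin n → Fin m, EMetric.diam (t n g) ^ sStar
        ≤ ENNReal.ofReal ((D * ((List.ofFn g).map r).prod) ^ sStar) := by
      intro g
      rw [ht, hediam, ENNReal.ofReal_rpow_of_nonneg (Metric.diam_nonneg) hsStar.le]
      refine ENNReal.ofReal_le_ofReal ?_
      exact Real.rpow_le_rpow Metric.diam_nonneg (key (List.ofFn g)).2 hsStar.le
    calc ∑ g : Fin n → Fin m, EMetric.diam (t n g) ^ sStar
        ≤ ∑ g : Fin n → Fin m, ENNReal.ofReal ((D * ((List.ofFn g).map r).prod) ^ sStar) :=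
          Finset.sum_le_sum fun g _ => hle g
      _ = ENNReal.ofReal (∑ g : Fin n → Fin m, (D * ((List.ofFn g).map r).prod) ^ sStar) := by
          rw [ENNReal.ofReal_sum_of_nonneg]
          intro g _
          exact Real.rpow_nonneg (mul_nonneg hD0.le (hprod_pos n g).le) _
      _ = ENNReal.ofReal (D ^ sStar) := by
          congr 1
          have : ∀ g : Fin n → Fin m, (D * ((List.ofFn g).map r).prod) ^ sStar
              = D ^ sStar * ∏ i : Fin n, r (g i) ^ sStar := by
            intro g
            rw [List.map_ofFn, List.prod_ofFn]
            simp only [Function.comp_apply]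
            rw [Real.mul_rpow hD0.le (Finset.prod_nonneg fun i _ => (hr (g i)).1.le),
              ← Real.finset_prod_rpow _ _ (fun i _ => (hr (g i)).1.le)]
          simp only [this, ← Finset.mul_sum]
          rw [← Fintype.piFinset_univ, ← Finset.prod_univ_sum (fun _ : Fin n => (Finset.univ : Finset (Fin m))) (fun _ j => r j ^ sStar)]
          simp [hsol]
  -- conclude via the Hausdorff measure bound
  have hμ : μH[sStar] F ≤ ENNReal.ofReal (D ^ sStar) := by
    have := MeasureTheory.Measure.hausdorffMeasure_le_liminf_sum sStar F R hRtendsto t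
      (Filter.Eventually.of_forall fun n => htdiam n) hcover
    refine this.trans ?_
    calc Filter.liminf (fun n => ∑ g : Fin n → Fin m, EMetric.diam (t n g) ^ sStar) Filter.atTop
        ≤ Filter.liminf (fun _ : ℕ => ENNReal.ofReal (D ^ sStar)) Filter.atTop :=
          Filter.liminf_le_liminf (Filter.Eventually.of_forall hsum)
      _ = ENNReal.ofReal (D ^ sStar) := Filter.liminf_const _
  have hne : μH[sStar] F ≠ ⊤ := ne_top_of_le_ne_top ENNReal.ofReal_ne_top hμ
  have : dimH F ≤ (sStar.toNNReal : ℝ≥0∞) := by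
    refine dimH_le_of_hausdorffMeasure_ne_top ?_
    rwa [Real.coe_toNNReal _ hsStar.le]
  simpa [ENNReal.ofReal] using this
end

section
/- In the setting of an F-limit set F built from an assignment σ ↦ f_σ of m-tuples of compressions on a collection 𝒳 of nonempty compact subsets of a metric space, let r ∈ (0,1). If U_σ ≤ (r,...,r) coordinatewise for every σ ∈ D, then dim_H(F) ≤ log(m)/(−log r). -/
open scoped ENNReal MeasureTheory

/-- Corollary 4.6(b): if `U_σ ≤ (r,…,r)` for all `σ` with `r ∈ (0,1)`, then `dim_H F ≤ log m / (− log r)`. -/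
theorem stmt_11 {X : Type*} [MetricSpace X] (m : ℕ) (hm : 2 ≤ m)
    (𝒳 : Set (Set (X)))
    (h𝒳 : ∀ E ∈ 𝒳, E.Nonempty ∧ IsCompact E ∧ 0 < Metric.diam E)
    (f : List (Fin m) → Fin m → Set (X) → Set (X))
    (hf : ∀ (σ : List (Fin m)) (j : Fin m), ∀ E ∈ 𝒳, f σ j E ∈ 𝒳 ∧ f σ j E ⊆ E)
    (E₀ : Set (X)) (hE₀ : E₀ ∈ 𝒳)
    (J : List (Fin m) → Set (X))
    (hJnil : J [] = E₀)
    (hJ : ∀ (σ : List (Fin m)) (j : Fin m), J (σ ++ [j]) = f σ j (J σ))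
    (F : Set (X))
    (hF : F = ⋂ (k : ℕ) (_ : 1 ≤ k), ⋃ (σ : List (Fin m)) (_ : σ.length = k), J σ)
    (r : ℝ) (hr : r ∈ Set.Ioo (0 : ℝ) 1)
    (hU : ∀ (σ : List (Fin m)) (i : Fin m), Uof 𝒳 (f σ i) ≤ r) :
    dimH F ≤ ENNReal.ofReal (Real.log m / (-Real.log r)) := by
  obtain ⟨hr0, hr1⟩ := hr
  have hm1 : (1 : ℝ) ≤ m := by exact_mod_cast Nat.one_le_of_lt hm
  have hlogr : Real.log r < 0 := Real.log_neg hr0 hr1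
  have hnegr : 0 < -Real.log r := by linarith
  have hlogm : 0 ≤ Real.log m := Real.log_nonneg hm1
  set s₀ : ℝ := Real.log m / (-Real.log r) with hs₀def
  have hs₀ : 0 ≤ s₀ := div_nonneg hlogm hnegr.le
  -- every J σ is in 𝒳
  have hJmem : ∀ σ : List (Fin m), J σ ∈ 𝒳 := by
    intro σ
    induction σ using List.reverseRecOn with
    | nil => rw [hJnil]; exact hE₀
    | append_singleton σ j ih => rw [hJ]; exact (hf σ j _ ih).1
  -- one-step diameter contraction
  have hstep : ∀ (σ : List (Fin m)) (j : Fin m),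
      Metric.diam (J (σ ++ [j])) ≤ r * Metric.diam (J σ) := by
    intro σ j
    have hmem := hJmem σ
    have hbdd : BddAbove ((fun E => Metric.diam (f σ j E) / Metric.diam E) '' 𝒳) := by
      refine ⟨1, ?_⟩
      rintro x ⟨E, hE, rfl⟩
      have hEle : Metric.diam (f σ j E) ≤ Metric.diam E :=
        Metric.diam_mono (hf σ j E hE).2 (h𝒳 E hE).2.1.isBounded
      exact div_le_one_of_le₀ hEle Metric.diam_nonneg
    have hle : Metric.diam (f σ j (J σ)) / Metric.diam (J σ) ≤ r :=
      le_trans (le_csSup hbdd ⟨J σ, hmem, rfl⟩) (hU σ j)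
    have hpos := (h𝒳 _ hmem).2.2
    rw [hJ]
    calc Metric.diam (f σ j (J σ))
        = Metric.diam (f σ j (J σ)) / Metric.diam (J σ) * Metric.diam (J σ) := by
          field_simp
      _ ≤ r * Metric.diam (J σ) := mul_le_mul_of_nonneg_right hle Metric.diam_nonneg
  -- diameter bound
  have hdiam : ∀ σ : List (Fin m),
      Metric.diam (J σ) ≤ r ^ σ.length * Metric.diam E₀ := by
    intro σ
    induction σ using List.reverseRecOn with
    | nil => simp [hJnil]
    | append_singleton σ j ih =>
      calc Metric.diam (J (σ ++ [j])) ≤ r * Metric.diam (J σ) := hstep σ j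
        _ ≤ r * (r ^ σ.length * Metric.diam E₀) :=
            mul_le_mul_of_nonneg_left ih hr0.le
        _ = r ^ (σ ++ [j]).length * Metric.diam E₀ := by
            simp [pow_succ]; ring
  have hediam : ∀ σ : List (Fin m),
      Metric.ediam (J σ) = ENNReal.ofReal (Metric.diam (J σ)) := by
    intro σ
    rw [Metric.diam, ENNReal.ofReal_toReal (h𝒳 _ (hJmem σ)).2.1.isBounded.ediam_ne_top]
  have hC : 0 ≤ Metric.diam E₀ := Metric.diam_nonneg
  -- main dimension bound
  borelize X
  refine dimH_le fun d' hμ => ?_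
  by_contra hlt
  push_neg at hlt
  have hd : s₀ < (d' : ℝ) := by
    have := (ENNReal.ofReal_lt_iff_lt_toReal hs₀ ENNReal.coe_ne_top).1 hlt
    simpa using this
  set d : ℝ := (d' : ℝ) with hddef
  have hd0 : 0 ≤ d := d'.2
  -- m * r ^ d < 1
  have hrd : 0 < r ^ d := Real.rpow_pos_of_pos hr0 d
  have hc1 : (m : ℝ) * r ^ d < 1 := by
    have h1 : Real.log m < d * (-Real.log r) := by
      have := (div_lt_iff₀ hnegr).1 hd
      linarith
    have h2 : Real.log ((m : ℝ) * r ^ d) < 0 := by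
      rw [Real.log_mul (by positivity) (ne_of_gt hrd), Real.log_rpow hr0]
      linarith
    have := Real.exp_log (by positivity : (0:ℝ) < (m : ℝ) * r ^ d)
    calc (m : ℝ) * r ^ d = Real.exp (Real.log ((m : ℝ) * r ^ d)) := this.symm
      _ < Real.exp 0 := Real.exp_lt_exp.2 h2
      _ = 1 := Real.exp_zero
  have hc0 : 0 ≤ (m : ℝ) * r ^ d := by positivity
  -- covering family indexed by vectors of length k+1
  set t : ∀ k : ℕ, List.Vector (Fin m) (k + 1) → Set X := fun k v => J v.1 with htdef
  set R : ℕ → ℝ≥0∞ := fun k => ENNReal.ofReal (r ^ (k + 1) * Metric.diam E₀) with hRdef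
  have hRlim : Filter.Tendsto R Filter.atTop (nhds 0) := by
    have h1 : Filter.Tendsto (fun k : ℕ => r ^ (k + 1) * Metric.diam E₀)
        Filter.atTop (nhds 0) := by
      have := (tendsto_pow_atTop_nhds_zero_of_lt_one hr0.le hr1).comp
        (Filter.tendsto_add_atTop_nat 1)
      simpa using this.mul_const (Metric.diam E₀)
    have := (ENNReal.continuous_ofReal.tendsto 0).comp h1
    rw [hRdef]; simpa [Function.comp_def] using this
  have ht : ∀ k : ℕ, ∀ v : List.Vector (Fin m) (k + 1),
      Metric.ediam (t k v) ≤ R k := by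
    intro k v
    rw [hediam]
    refine ENNReal.ofReal_le_ofReal ?_
    have := hdiam v.1
    rwa [v.2] at this
  have hst : ∀ k : ℕ, F ⊆ ⋃ v : List.Vector (Fin m) (k + 1), t k v := by
    intro k x hx
    rw [hF] at hx
    have hx' : x ∈ ⋃ (σ : List (Fin m)) (_ : σ.length = k + 1), J σ := by
      exact Set.mem_iInter.1 (Set.mem_iInter.1 hx (k + 1)) (Nat.succ_le_succ (Nat.zero_le k))
    obtain ⟨σ, hσ⟩ := Set.mem_iUnion.1 hx'
    obtain ⟨hlen, hxσ⟩ := Set.mem_iUnion.1 hσ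
    exact Set.mem_iUnion.2 ⟨⟨σ, hlen⟩, hxσ⟩
  have hmain : μH[d] F ≤ Filter.liminf
      (fun k => ∑ v : List.Vector (Fin m) (k + 1), Metric.ediam (t k v) ^ d)
      Filter.atTop :=
    MeasureTheory.Measure.hausdorffMeasure_le_liminf_sum d F R hRlim t
      (Filter.Eventually.of_forall ht) (Filter.Eventually.of_forall hst)
  -- bound the sums
  have hsum : ∀ k : ℕ,
      (∑ v : List.Vector (Fin m) (k + 1), Metric.ediam (t k v) ^ d)
        ≤ ENNReal.ofReal (((m : ℝ) * r ^ d) ^ (k + 1) * Metric.diam E₀ ^ d) := by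
    intro k
    have hterm : ∀ v : List.Vector (Fin m) (k + 1),
        Metric.ediam (t k v) ^ d ≤ ENNReal.ofReal ((r ^ (k + 1) * Metric.diam E₀) ^ d) := by
      intro v
      rw [← ENNReal.ofReal_rpow_of_nonneg (by positivity) hd0]
      exact ENNReal.rpow_le_rpow (ht k v) hd0
    calc (∑ v : List.Vector (Fin m) (k + 1), Metric.ediam (t k v) ^ d)
        ≤ ∑ _v : List.Vector (Fin m) (k + 1),
            ENNReal.ofReal ((r ^ (k + 1) * Metric.diam E₀) ^ d) :=
          Finset.sum_le_sum fun v _ => hterm v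
      _ = (Fintype.card (List.Vector (Fin m) (k + 1)) : ℝ≥0∞) *
            ENNReal.ofReal ((r ^ (k + 1) * Metric.diam E₀) ^ d) := by
          rw [Finset.sum_const, Finset.card_univ, nsmul_eq_mul]
      _ = ENNReal.ofReal (((m : ℝ) * r ^ d) ^ (k + 1) * Metric.diam E₀ ^ d) := by
          rw [card_vector, Fintype.card_fin]
          rw [← ENNReal.ofReal_natCast, ← ENNReal.ofReal_mul (by positivity)]
          congr 1
          push_cast
          rw [Real.mul_rpow (by positivity) hC, mul_pow, ← mul_assoc]
          congr 2
          rw [← Real.rpow_natCast r (k + 1), ← Real.rpow_natCast (r ^ d) (k + 1),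
            ← Real.rpow_mul hr0.le, ← Real.rpow_mul hr0.le, mul_comm]
  -- the bound tends to zero
  have hlim0 : Filter.Tendsto
      (fun k : ℕ => ENNReal.ofReal (((m : ℝ) * r ^ d) ^ (k + 1) * Metric.diam E₀ ^ d))
      Filter.atTop (nhds 0) := by
    have h1 : Filter.Tendsto (fun k : ℕ => ((m : ℝ) * r ^ d) ^ (k + 1) * Metric.diam E₀ ^ d)
        Filter.atTop (nhds 0) := by
      have := (tendsto_pow_atTop_nhds_zero_of_lt_one hc0 hc1).comp
        (Filter.tendsto_add_atTop_nat 1)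
      simpa using this.mul_const (Metric.diam E₀ ^ d)
    have := (ENNReal.continuous_ofReal.tendsto 0).comp h1
    simpa [Function.comp_def] using this
  have hliminf : Filter.liminf
      (fun k => ∑ v : List.Vector (Fin m) (k + 1), Metric.ediam (t k v) ^ d)
      Filter.atTop ≤ 0 := by
    refine le_trans (Filter.liminf_le_liminf (Filter.Eventually.of_forall hsum)) ?_
    exact le_of_eq hlim0.liminf_eq
  have : μH[d] F = 0 := le_antisymm (hmain.trans hliminf) zero_le
  rw [hddef] at this
  exact (ENNReal.top_ne_zero) (hμ ▸ this)
end

section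
/- In the setting of an F-limit set F built from an assignment σ ↦ f_σ of m-tuples of compressions on a collection 𝒳 of nonempty compact subsets of a metric space: if u := sup_{σ∈D} Σ_{j=1}^m U(f_σ^{(j)}) satisfies u < 1, then dim_H(F) ≤ log(m)/(log(m) − log(u)). -/
open Finset in
lemma sum_rpow_le_aux {m : ℕ} (hm : 0 < m) (a : Fin m → ℝ) (ha : ∀ j, 0 ≤ a j)
    {s : ℝ} (hs0 : 0 < s) (hs1 : s ≤ 1) :
    ∑ j, a j ^ s ≤ (m : ℝ) ^ (1 - s : ℝ) * (∑ j, a j) ^ s := by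
  have hmR : (0:ℝ) < m := by exact_mod_cast hm
  have hp : (1:ℝ) ≤ 1 / s := (le_div_iff₀ hs0).mpr (by linarith)
  have key := Real.arith_mean_le_rpow_mean Finset.univ (fun _ => 1 / (m:ℝ))
    (fun j => a j ^ s) (fun i _ => by positivity)
    (by simp [Finset.card_univ]; field_simp) (fun i _ => Real.rpow_nonneg (ha i) s) hp
  simp only [one_div_one_div] at key
  have h1 : ∀ j : Fin m, (a j ^ s) ^ (1/s : ℝ) = a j := fun j => by
    rw [← Real.rpow_mul (ha j), mul_one_div_cancel hs0.ne', Real.rpow_one]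
  simp only [h1] at key
  rw [← Finset.mul_sum, ← Finset.mul_sum] at key
  have hsum : (0:ℝ) ≤ ∑ j, a j := Finset.sum_nonneg fun j _ => ha j
  rw [Real.mul_rpow (by positivity) hsum] at key
  have hinv : ((1:ℝ)/m) ^ s = (m:ℝ) ^ (-s : ℝ) := by
    rw [one_div, ← Real.rpow_neg_one, ← Real.rpow_mul hmR.le]
    norm_num
  rw [hinv] at key
  have := mul_le_mul_of_nonneg_left key hmR.le
  calc ∑ j, a j ^ s = (m:ℝ) * ((1/m) * ∑ j, a j ^ s) := by field_simp
    _ ≤ (m:ℝ) * ((m:ℝ) ^ (-s:ℝ) * (∑ j, a j) ^ s) := this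
    _ = (m : ℝ) ^ (1 - s : ℝ) * (∑ j, a j) ^ s := by
        rw [← mul_assoc]
        congr 1
        rw [sub_eq_add_neg, Real.rpow_add hmR, Real.rpow_one]

/-- Corollary 4.7(b): if `u = sup_σ ∑_j U(f_σ^{(j)}) < 1` then `dim_H F ≤ log m / (log m − log u)`. -/
theorem stmt_14 {X : Type*} [MetricSpace X] (m : ℕ) (hm : 2 ≤ m)
    (𝒳 : Set (Set (X)))
    (h𝒳 : ∀ E ∈ 𝒳, E.Nonempty ∧ IsCompact E ∧ 0 < Metric.diam E)
    (f : List (Fin m) → Fin m → Set (X) → Set (X))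
    (hf : ∀ (σ : List (Fin m)) (j : Fin m), ∀ E ∈ 𝒳, f σ j E ∈ 𝒳 ∧ f σ j E ⊆ E)
    (E₀ : Set (X)) (hE₀ : E₀ ∈ 𝒳)
    (J : List (Fin m) → Set (X))
    (hJnil : J [] = E₀)
    (hJ : ∀ (σ : List (Fin m)) (j : Fin m), J (σ ++ [j]) = f σ j (J σ))
    (F : Set (X))
    (hF : F = ⋂ (k : ℕ) (_ : 1 ≤ k), ⋃ (σ : List (Fin m)) (_ : σ.length = k), J σ)
    (hu : (⨆ σ : List (Fin m), ∑ j : Fin m, Uof 𝒳 (f σ j)) < 1) :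
    dimH F ≤ ENNReal.ofReal (Real.log m /
      (Real.log m - Real.log (⨆ σ : List (Fin m), ∑ j : Fin m, Uof 𝒳 (f σ j)))) := by
  borelize X
  have hm0 : 0 < m := by omega
  have hmR : (1:ℝ) < m := by exact_mod_cast hm
  set u : ℝ := ⨆ σ : List (Fin m), ∑ j : Fin m, Uof 𝒳 (f σ j) with hu_def
  -- basic facts on Uof
  have hUle1 : ∀ σ (j : Fin m), Uof 𝒳 (f σ j) ≤ 1 := by
    intro σ j
    apply Real.sSup_le _ zero_le_one
    rintro x ⟨E, hE, rfl⟩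
    obtain ⟨-, hEc, hEd⟩ := h𝒳 E hE
    exact div_le_one_of_le₀ (Metric.diam_mono (hf σ j E hE).2 hEc.isBounded) hEd.le
  have hbdd : ∀ σ (j : Fin m), BddAbove ((fun E => Metric.diam (f σ j E) / Metric.diam E) '' 𝒳) := by
    intro σ j
    refine ⟨1, ?_⟩
    rintro x ⟨E, hE, rfl⟩
    obtain ⟨-, hEc, hEd⟩ := h𝒳 E hE
    exact div_le_one_of_le₀ (Metric.diam_mono (hf σ j E hE).2 hEc.isBounded) hEd.le
  have hUpos : ∀ σ (j : Fin m), 0 < Uof 𝒳 (f σ j) := by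
    intro σ j
    have h1 : Metric.diam (f σ j E₀) / Metric.diam E₀ ≤ Uof 𝒳 (f σ j) :=
      le_csSup (hbdd σ j) ⟨E₀, hE₀, rfl⟩
    have h2 : 0 < Metric.diam (f σ j E₀) / Metric.diam E₀ :=
      div_pos (h𝒳 _ ((hf σ j E₀ hE₀).1)).2.2 (h𝒳 _ hE₀).2.2
    linarith
  have hUdiam : ∀ σ (j : Fin m), ∀ E ∈ 𝒳,
      Metric.diam (f σ j E) ≤ Uof 𝒳 (f σ j) * Metric.diam E := by
    intro σ j E hE
    have h1 : Metric.diam (f σ j E) / Metric.diam E ≤ Uof 𝒳 (f σ j) :=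
      le_csSup (hbdd σ j) ⟨E, hE, rfl⟩
    have hEd := (h𝒳 E hE).2.2
    calc Metric.diam (f σ j E) = (Metric.diam (f σ j E) / Metric.diam E) * Metric.diam E := by
          field_simp
      _ ≤ Uof 𝒳 (f σ j) * Metric.diam E := by
          exact mul_le_mul_of_nonneg_right h1 hEd.le
  -- sums bounded by u
  have hsum_bdd : BddAbove (Set.range fun σ : List (Fin m) => ∑ j : Fin m, Uof 𝒳 (f σ j)) := by
    refine ⟨m, ?_⟩
    rintro x ⟨σ, rfl⟩
    calc ∑ j : Fin m, Uof 𝒳 (f σ j) ≤ ∑ _j : Fin m, (1:ℝ) :=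
          Finset.sum_le_sum fun j _ => hUle1 σ j
      _ = m := by simp
  have hsum_le : ∀ σ, ∑ j : Fin m, Uof 𝒳 (f σ j) ≤ u := fun σ => le_ciSup hsum_bdd σ
  have hupos : 0 < u := by
    have := hsum_le []
    have h2 : 0 < ∑ j : Fin m, Uof 𝒳 (f [] j) :=
      Finset.sum_pos (fun j _ => hUpos [] j) (by simp [Finset.univ_nonempty_iff]; exact Fin.pos_iff_nonempty.mp hm0)
    linarith
  have hUleu : ∀ σ (j : Fin m), Uof 𝒳 (f σ j) ≤ u := by
    intro σ j
    refine le_trans ?_ (hsum_le σ)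
    exact Finset.single_le_sum (fun i _ => (hUpos σ i).le) (Finset.mem_univ j)
  -- J σ ∈ 𝒳
  have hJmem : ∀ σ, J σ ∈ 𝒳 := by
    intro σ
    induction σ using List.reverseRecOn with
    | nil => rw [hJnil]; exact hE₀
    | append_singleton σ j ih => rw [hJ]; exact (hf σ j _ ih).1
  -- diameter decay
  have hdiam_pow : ∀ σ : List (Fin m),
      Metric.diam (J σ) ≤ u ^ σ.length * Metric.diam E₀ := by
    intro σ
    induction σ using List.reverseRecOn with
    | nil => simp [hJnil]
    | append_singleton σ j ih =>
        rw [hJ]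
        calc Metric.diam (f σ j (J σ)) ≤ Uof 𝒳 (f σ j) * Metric.diam (J σ) :=
              hUdiam σ j _ (hJmem σ)
          _ ≤ u * (u ^ σ.length * Metric.diam E₀) := by
              apply mul_le_mul (hUleu σ j) ih Metric.diam_nonneg hupos.le
          _ = u ^ (σ ++ [j]).length * Metric.diam E₀ := by
              rw [List.length_append, List.length_singleton, pow_succ]
              ring
  -- the exponent
  have hlogm : 0 < Real.log m := Real.log_pos hmR
  have hlogu : Real.log u < 0 := Real.log_neg hupos hu
  have hden : 0 < Real.log m - Real.log u := by linarith
  set s : ℝ := Real.log m / (Real.log m - Real.log u) with hs_def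
  have hs0 : 0 < s := div_pos hlogm hden
  have hs1 : s ≤ 1 := by
    rw [hs_def, div_le_one hden]; linarith
  have hmul : s * (Real.log m - Real.log u) = Real.log m :=
    div_mul_cancel₀ _ hden.ne'
  have hident : (m:ℝ) ^ (1 - s : ℝ) * u ^ s = 1 := by
    have hmRpos : (0:ℝ) < m := by linarith
    rw [Real.rpow_def_of_pos hmRpos, Real.rpow_def_of_pos hupos, ← Real.exp_add,
      show Real.log m * (1 - s) + Real.log u * s = 0 from by linear_combination -hmul,
      Real.exp_zero]
  -- key sum inequality
  have hkey : ∀ σ, ∑ j : Fin m, Uof 𝒳 (f σ j) ^ s ≤ 1 := by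
    intro σ
    calc ∑ j : Fin m, Uof 𝒳 (f σ j) ^ s
        ≤ (m : ℝ) ^ (1 - s : ℝ) * (∑ j : Fin m, Uof 𝒳 (f σ j)) ^ s :=
          sum_rpow_le_aux hm0 _ (fun j => (hUpos σ j).le) hs0 hs1
      _ ≤ (m : ℝ) ^ (1 - s : ℝ) * u ^ s := by
          apply mul_le_mul_of_nonneg_left
            (Real.rpow_le_rpow (Finset.sum_nonneg fun j _ => (hUpos σ j).le) (hsum_le σ) hs0.le)
            (Real.rpow_nonneg (by positivity) _)
      _ = 1 := hident
  -- sums over words of length k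
  have hSsum : ∀ k : ℕ, ∑ g : Fin k → Fin m, Metric.diam (J (List.ofFn g)) ^ s
      ≤ Metric.diam E₀ ^ s := by
    intro k
    induction k with
    | zero => simp [hJnil]
    | succ k ih =>
        have := Fintype.sum_equiv (Fin.snocEquiv (fun _ : Fin (k+1) => Fin m))
          (fun p => Metric.diam (J (List.ofFn ((Fin.snocEquiv (fun _ => Fin m)) p))) ^ s)
          (fun g => Metric.diam (J (List.ofFn g)) ^ s) (fun p => rfl)
        rw [← this, Fintype.sum_prod_type_right]
        have hsnoc : ∀ (g : Fin k → Fin m) (j : Fin m),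
            List.ofFn ((Fin.snocEquiv (fun _ : Fin (k+1) => Fin m)) (j, g))
              = List.ofFn g ++ [j] := by
          intro g j
          rw [List.ofFn_succ']
          simp [Fin.snocEquiv, List.concat_eq_append]
        calc ∑ g : Fin k → Fin m, ∑ j : Fin m,
              Metric.diam (J (List.ofFn ((Fin.snocEquiv (fun _ : Fin (k+1) => Fin m)) (j, g)))) ^ s
            = ∑ g : Fin k → Fin m, ∑ j : Fin m,
              Metric.diam (J (List.ofFn g ++ [j])) ^ s := by
              exact Finset.sum_congr rfl fun g _ => Finset.sum_congr rfl fun j _ => by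
                rw [hsnoc]
          _ ≤ ∑ g : Fin k → Fin m, Metric.diam (J (List.ofFn g)) ^ s := by
              apply Finset.sum_le_sum
              intro g _
              have hd : ∀ j : Fin m, Metric.diam (J (List.ofFn g ++ [j])) ^ s
                  ≤ Uof 𝒳 (f (List.ofFn g) j) ^ s * Metric.diam (J (List.ofFn g)) ^ s := by
                intro j
                rw [← Real.mul_rpow (hUpos _ j).le Metric.diam_nonneg]
                apply Real.rpow_le_rpow Metric.diam_nonneg _ hs0.le
                rw [hJ]
                exact hUdiam _ j _ (hJmem _)
              calc ∑ j : Fin m, Metric.diam (J (List.ofFn g ++ [j])) ^ s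
                  ≤ ∑ j : Fin m, Uof 𝒳 (f (List.ofFn g) j) ^ s * Metric.diam (J (List.ofFn g)) ^ s :=
                    Finset.sum_le_sum fun j _ => hd j
                _ = (∑ j : Fin m, Uof 𝒳 (f (List.ofFn g) j) ^ s) * Metric.diam (J (List.ofFn g)) ^ s := by
                    rw [Finset.sum_mul]
                _ ≤ 1 * Metric.diam (J (List.ofFn g)) ^ s :=
                    mul_le_mul_of_nonneg_right (hkey _) (Real.rpow_nonneg Metric.diam_nonneg _)
                _ = Metric.diam (J (List.ofFn g)) ^ s := one_mul _
          _ ≤ Metric.diam E₀ ^ s := ih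
  -- ediam = ofReal diam for sets in 𝒳
  have hediam : ∀ E ∈ 𝒳, Metric.ediam E = ENNReal.ofReal (Metric.diam E) := by
    intro E hE
    rw [Metric.diam, ENNReal.ofReal_toReal (h𝒳 E hE).2.1.isBounded.ediam_ne_top]
  -- Hausdorff measure bound
  have hmeasure : MeasureTheory.Measure.hausdorffMeasure s F ≤ ENNReal.ofReal (Metric.diam E₀ ^ s) := by
    have hcov := MeasureTheory.Measure.hausdorffMeasure_le_liminf_sum (X := X) s F
      (l := Filter.atTop)
      (fun k => ENNReal.ofReal (u ^ k * Metric.diam E₀))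
      (by
        have h1 : Filter.Tendsto (fun k : ℕ => u ^ k * Metric.diam E₀) Filter.atTop (nhds 0) := by
          have := tendsto_pow_atTop_nhds_zero_of_lt_one hupos.le hu
          simpa using this.mul_const (Metric.diam E₀)
        have := (ENNReal.continuous_ofReal.tendsto 0).comp h1
        rw [ENNReal.ofReal_zero] at this
        exact this)
      (fun k (g : Fin k → Fin m) => J (List.ofFn g))
      (by
        filter_upwards with k
        intro g
        rw [hediam _ (hJmem _)]
        apply ENNReal.ofReal_le_ofReal
        have := hdiam_pow (List.ofFn g)
        simpa using this)
      (by
        filter_upwards [Filter.eventually_ge_atTop 1] with k hk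
        intro x hx
        rw [hF] at hx
        simp only [Set.mem_iInter] at hx
        have hx' := hx k hk
        simp only [Set.mem_iUnion] at hx'
        obtain ⟨σ, hlen, hxσ⟩ := hx'
        subst hlen
        refine Set.mem_iUnion.mpr ⟨σ.get, ?_⟩
        rwa [List.ofFn_get])
    refine le_trans hcov ?_
    apply Filter.liminf_le_of_frequently_le'
    apply Filter.Eventually.frequently
    filter_upwards with k
    have : ∀ g : Fin k → Fin m, Metric.ediam (J (List.ofFn g)) ^ s
        = ENNReal.ofReal (Metric.diam (J (List.ofFn g)) ^ s) := by
      intro g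
      rw [hediam _ (hJmem _), ← ENNReal.ofReal_rpow_of_nonneg Metric.diam_nonneg hs0.le]
    rw [Finset.sum_congr rfl fun g _ => this g, ← ENNReal.ofReal_sum_of_nonneg
      (fun g _ => Real.rpow_nonneg Metric.diam_nonneg _)]
    exact ENNReal.ofReal_le_ofReal (hSsum k)
  -- conclude
  have hne : MeasureTheory.Measure.hausdorffMeasure ((s.toNNReal : NNReal) : ℝ) F ≠ ⊤ := by
    rw [Real.coe_toNNReal _ hs0.le]
    exact ne_top_of_le_ne_top ENNReal.ofReal_ne_top hmeasure
  have hle := dimH_le_of_hausdorffMeasure_ne_top hne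
  rwa [ENNReal.ofReal]
end

section
/- Let the Cantor-type construction be driven by the sequence k_ℓ = ((ℓ+1)/(4ℓ+6), (2ℓ+5)/(8ℓ+16)) for ℓ ≥ 0. Then the resulting limit set F ⊆ [0,1] satisfies dim_H(F) = 1/2. -/
open scoped ENNReal NNReal

namespace Ex51

structure CD (a b : ℕ → ℝ) : Prop where
  a0 : a 0 = 0
  b0 : b 0 = 1
  aL : ∀ ℓ : ℕ, a (2*ℓ+1) = a ℓ
  bL : ∀ ℓ : ℕ, b (2*ℓ+1) = a ℓ + (((ℓ:ℝ)+1)/(4*(ℓ:ℝ)+6)) * (b ℓ - a ℓ)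
  aR : ∀ ℓ : ℕ, a (2*ℓ+2) = b ℓ - ((2*(ℓ:ℝ)+5)/(8*(ℓ:ℝ)+16)) * (b ℓ - a ℓ)
  bR : ∀ ℓ : ℕ, b (2*ℓ+2) = b ℓ

lemma binRec {P : ℕ → Prop} (h0 : P 0) (h1 : ∀ m, P m → P (2*m+1))
    (h2 : ∀ m, P m → P (2*m+2)) : ∀ n, P n := by
  intro n
  induction n using Nat.strong_induction_on with
  | _ n ih =>
    match n with
    | 0 => exact h0
    | Nat.succ k =>
      simp only [Nat.succ_eq_add_one]
      rcases Nat.even_or_odd k with ⟨m, hm⟩ | ⟨m, hm⟩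
      · have e : k + 1 = 2*m+1 := by omega
        rw [e]; exact h1 m (ih m (by omega))
      · have e : k + 1 = 2*m+2 := by omega
        rw [e]; exact h2 m (ih m (by omega))

def lev (n ℓ : ℕ) : Prop := 2^n ≤ ℓ+1 ∧ ℓ+2 ≤ 2^(n+1)

lemma lev_zero : lev 0 0 := by constructor <;> norm_num

lemma lev_left {n ℓ : ℕ} (h : lev n ℓ) : lev (n+1) (2*ℓ+1) := by
  obtain ⟨h1, h2⟩ := h
  have e1 : (2:ℕ)^(n+1) = 2*2^n := by ring
  have e2 : (2:ℕ)^(n+1+1) = 2*2^(n+1) := by ring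
  exact ⟨by omega, by omega⟩

lemma lev_right {n ℓ : ℕ} (h : lev n ℓ) : lev (n+1) (2*ℓ+2) := by
  obtain ⟨h1, h2⟩ := h
  have e1 : (2:ℕ)^(n+1) = 2*2^n := by ring
  have e2 : (2:ℕ)^(n+1+1) = 2*2^(n+1) := by ring
  exact ⟨by omega, by omega⟩

lemma lev_zero_eq {n : ℕ} (h : lev n 0) : n = 0 := by
  obtain ⟨h1, h2⟩ := h
  by_contra hn
  have : 2^1 ≤ 2^n := Nat.pow_le_pow_right (by norm_num) (by omega)
  simp at this; omega

lemma lev_left_parent {n m : ℕ} (h : lev n (2*m+1)) : ∃ n', n = n' + 1 ∧ lev n' m := by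
  obtain ⟨h1, h2⟩ := h
  have hn : n ≠ 0 := by
    rintro rfl
    have e : (2:ℕ)^(0+1) = 2 := by norm_num
    omega
  obtain ⟨n', rfl⟩ := Nat.exists_eq_succ_of_ne_zero hn
  have e1 : (2:ℕ)^(n'+1) = 2*2^n' := by ring
  have e2 : (2:ℕ)^(n'+1+1) = 4*2^n' := by ring
  exact ⟨n', rfl, by omega, by omega⟩

lemma lev_right_parent {n m : ℕ} (h : lev n (2*m+2)) : ∃ n', n = n' + 1 ∧ lev n' m := by
  obtain ⟨h1, h2⟩ := h
  have hn : n ≠ 0 := by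
    rintro rfl
    have e : (2:ℕ)^(0+1) = 2 := by norm_num
    omega
  obtain ⟨n', rfl⟩ := Nat.exists_eq_succ_of_ne_zero hn
  have e1 : (2:ℕ)^(n'+1) = 2*2^n' := by ring
  have e2 : (2:ℕ)^(n'+1+1) = 4*2^n' := by ring
  exact ⟨n', rfl, by omega, by omega⟩

lemma exists_lev (ℓ : ℕ) : ∃ n, lev n ℓ := by
  refine ⟨Nat.log 2 (ℓ+1), Nat.pow_log_le_self 2 (by omega), ?_⟩
  have := Nat.lt_pow_succ_log_self (by norm_num : 1 < 2) (ℓ+1)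
  omega

lemma lev_unique {n m ℓ : ℕ} (h : lev n ℓ) (h' : lev m ℓ) : n = m := by
  by_contra hne
  rcases Nat.lt_or_ge n m with hlt | hge
  · have : 2^(n+1) ≤ 2^m := Nat.pow_le_pow_right (by norm_num) (by omega)
    obtain ⟨h1, h2⟩ := h; obtain ⟨h3, h4⟩ := h'
    omega
  · have : 2^(m+1) ≤ 2^n := Nat.pow_le_pow_right (by norm_num) (by omega)
    obtain ⟨h1, h2⟩ := h; obtain ⟨h3, h4⟩ := h'
    omega

-- scalar inequalities
lemma s1 {L : ℝ} (hL : 0 ≤ L) :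
    (1/3)*(1+2/((2*L+1)+1))/4 ≤ (L+1)/(4*L+6) * ((1/3)*(1+2/(L+1))) := by
  have h1 : (0:ℝ) < L+1 := by linarith
  have h2 : (0:ℝ) < 4*L+6 := by linarith
  have h3 : (0:ℝ) < 2*L+2 := by linarith
  rw [div_le_iff₀ (by norm_num : (0:ℝ) < 4)]
  field_simp
  nlinarith [sq_nonneg L, sq_nonneg (L+1)]

lemma s2 {L : ℝ} (hL : 0 ≤ L) :
    (L+1)/(4*L+6) * (2-2/(L+2)) ≤ (2-2/((2*L+1)+2))/4 := by
  have h1 : (0:ℝ) < L+2 := by linarith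
  have h2 : (0:ℝ) < 4*L+6 := by linarith
  have h3 : (0:ℝ) < 2*L+3 := by linarith
  rw [le_div_iff₀ (by norm_num : (0:ℝ) < 4)]
  field_simp
  nlinarith [sq_nonneg L, sq_nonneg (L+1)]

lemma s3 {L : ℝ} (hL : 0 ≤ L) :
    (1/3)*(1+2/((2*L+2)+1))/4 ≤ (2*L+5)/(8*L+16) * ((1/3)*(1+2/(L+1))) := by
  have h1 : (0:ℝ) < L+1 := by linarith
  have h2 : (0:ℝ) < 8*L+16 := by linarith
  have h3 : (0:ℝ) < 2*L+3 := by linarith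
  rw [div_le_iff₀ (by norm_num : (0:ℝ) < 4)]
  field_simp
  nlinarith [sq_nonneg L, sq_nonneg (L+1)]

lemma s4 {L : ℝ} (hL : 0 ≤ L) :
    (2*L+5)/(8*L+16) * (2-2/(L+2)) ≤ (2-2/((2*L+2)+2))/4 := by
  have h1 : (0:ℝ) < L+2 := by linarith
  have h2 : (0:ℝ) < 8*L+16 := by linarith
  rw [le_div_iff₀ (by norm_num : (0:ℝ) < 4)]
  field_simp
  nlinarith [sq_nonneg L, sq_nonneg (L+1)]

lemma step_bound {k lo lo' hi hi' D Q : ℝ} (hQ : 0 ≤ Q) (hk : 0 ≤ k)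
    (hlo : lo' ≤ k * lo) (hhi : k * hi ≤ hi') (hD1 : lo * Q ≤ D) (hD2 : D ≤ hi * Q) :
    lo' * Q ≤ k * D ∧ k * D ≤ hi' * Q := by
  constructor
  · calc lo' * Q ≤ (k * lo) * Q := by nlinarith
    _ = k * (lo * Q) := by ring
    _ ≤ k * D := by nlinarith
  · calc k * D ≤ k * (hi * Q) := by nlinarith
    _ = (k * hi) * Q := by ring
    _ ≤ hi' * Q := by nlinarith

variable {a b : ℕ → ℝ}

lemma CD.len_bounds (hcd : CD a b) : ∀ ℓ n, lev n ℓ →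
    ((1/3)*(1+2/((ℓ:ℝ)+1))) * (1/4:ℝ)^n ≤ b ℓ - a ℓ ∧
      b ℓ - a ℓ ≤ (2-2/((ℓ:ℝ)+2)) * (1/4:ℝ)^n := by
  refine binRec ?_ ?_ ?_
  · intro n hn
    have h0 : n = 0 := lev_zero_eq hn
    subst h0
    rw [hcd.a0, hcd.b0]
    norm_num
  · intro m ih n hn
    obtain ⟨n', rfl, hm⟩ := lev_left_parent hn
    have ihm := ih n' hm
    have hL : (0:ℝ) ≤ (m:ℝ) := Nat.cast_nonneg m
    have hd : b (2*m+1) - a (2*m+1) = (((m:ℝ)+1)/(4*(m:ℝ)+6)) * (b m - a m) := by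
      rw [hcd.aL, hcd.bL]; ring
    have hk : (0:ℝ) ≤ ((m:ℝ)+1)/(4*(m:ℝ)+6) := by positivity
    have hQ : (0:ℝ) ≤ (1/4:ℝ)^n' := by positivity
    have key := step_bound hQ hk (s1 hL) (s2 hL) ihm.1 ihm.2
    have hcast : ((2*m+1 : ℕ):ℝ) = 2*(m:ℝ)+1 := by push_cast; ring
    have hpow : (1/4:ℝ)^(n'+1) = (1/4:ℝ)^n' * (1/4) := by ring
    constructor
    · rw [hd, hcast, hpow]
      calc (1/3)*(1+2/((2*(m:ℝ)+1)+1)) * ((1/4:ℝ)^n' * (1/4))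
          = ((1/3)*(1+2/((2*(m:ℝ)+1)+1))/4) * (1/4:ℝ)^n' := by ring
        _ ≤ _ := key.1
    · rw [hd, hcast, hpow]
      calc (((m:ℝ)+1)/(4*(m:ℝ)+6)) * (b m - a m)
          ≤ (2-2/((2*(m:ℝ)+1)+2))/4 * (1/4:ℝ)^n' := key.2
        _ = (2-2/((2*(m:ℝ)+1)+2)) * ((1/4:ℝ)^n' * (1/4)) := by ring
  · intro m ih n hn
    obtain ⟨n', rfl, hm⟩ := lev_right_parent hn
    have ihm := ih n' hm
    have hL : (0:ℝ) ≤ (m:ℝ) := Nat.cast_nonneg m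
    have hd : b (2*m+2) - a (2*m+2) = ((2*(m:ℝ)+5)/(8*(m:ℝ)+16)) * (b m - a m) := by
      rw [hcd.aR, hcd.bR]; ring
    have hk : (0:ℝ) ≤ (2*(m:ℝ)+5)/(8*(m:ℝ)+16) := by positivity
    have hQ : (0:ℝ) ≤ (1/4:ℝ)^n' := by positivity
    have key := step_bound hQ hk (s3 hL) (s4 hL) ihm.1 ihm.2
    have hcast : ((2*m+2 : ℕ):ℝ) = 2*(m:ℝ)+2 := by push_cast; ring
    have hpow : (1/4:ℝ)^(n'+1) = (1/4:ℝ)^n' * (1/4) := by ring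
    constructor
    · rw [hd, hcast, hpow]
      calc (1/3)*(1+2/((2*(m:ℝ)+2)+1)) * ((1/4:ℝ)^n' * (1/4))
          = ((1/3)*(1+2/((2*(m:ℝ)+2)+1))/4) * (1/4:ℝ)^n' := by ring
        _ ≤ _ := key.1
    · rw [hd, hcast, hpow]
      calc ((2*(m:ℝ)+5)/(8*(m:ℝ)+16)) * (b m - a m)
          ≤ (2-2/((2*(m:ℝ)+2)+2))/4 * (1/4:ℝ)^n' := key.2
        _ = (2-2/((2*(m:ℝ)+2)+2)) * ((1/4:ℝ)^n' * (1/4)) := by ring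

lemma CD.len_lower (hcd : CD a b) {n ℓ : ℕ} (h : lev n ℓ) :
    (1/3) * (1/4:ℝ)^n ≤ b ℓ - a ℓ := by
  have := (hcd.len_bounds ℓ n h).1
  have hL : (0:ℝ) ≤ (ℓ:ℝ) := Nat.cast_nonneg ℓ
  have h2 : (1/3:ℝ) * (1/4:ℝ)^n ≤ ((1/3)*(1+2/((ℓ:ℝ)+1))) * (1/4:ℝ)^n := by
    have : (0:ℝ) ≤ 2/((ℓ:ℝ)+1) := by positivity
    have hQ : (0:ℝ) ≤ (1/4:ℝ)^n := by positivity
    nlinarith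
  linarith

lemma CD.len_upper (hcd : CD a b) {n ℓ : ℕ} (h : lev n ℓ) :
    b ℓ - a ℓ ≤ 2 * (1/4:ℝ)^n := by
  have := (hcd.len_bounds ℓ n h).2
  have hL : (0:ℝ) ≤ (ℓ:ℝ) := Nat.cast_nonneg ℓ
  have h2 : (2-2/((ℓ:ℝ)+2)) * (1/4:ℝ)^n ≤ 2 * (1/4:ℝ)^n := by
    have : (0:ℝ) ≤ 2/((ℓ:ℝ)+2) := by positivity
    have hQ : (0:ℝ) ≤ (1/4:ℝ)^n := by positivity
    nlinarith
  linarith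

lemma CD.len_pos (hcd : CD a b) (ℓ : ℕ) : 0 < b ℓ - a ℓ := by
  obtain ⟨n, hn⟩ := exists_lev ℓ
  have := hcd.len_lower hn
  have : (0:ℝ) < (1/3) * (1/4:ℝ)^n := by positivity
  linarith [hcd.len_lower hn]

lemma CD.a_le_b (hcd : CD a b) (ℓ : ℕ) : a ℓ ≤ b ℓ := by
  linarith [hcd.len_pos ℓ]


-- ratio range facts
lemma k1_range {L : ℝ} (hL : 0 ≤ L) :
    0 ≤ (L+1)/(4*L+6) ∧ (L+1)/(4*L+6) ≤ 1/4 := by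
  constructor
  · positivity
  · rw [div_le_iff₀ (by linarith)]; linarith

lemma k2_range {L : ℝ} (hL : 0 ≤ L) :
    0 ≤ (2*L+5)/(8*L+16) ∧ (2*L+5)/(8*L+16) ≤ 5/16 := by
  constructor
  · positivity
  · rw [div_le_iff₀ (by linarith)]; linarith

-- child interval facts
lemma CD.a_le_aL (hcd : CD a b) (ℓ : ℕ) : a ℓ ≤ a (2*ℓ+1) := (hcd.aL ℓ).ge

lemma CD.bL_le_b (hcd : CD a b) (ℓ : ℕ) : b (2*ℓ+1) ≤ b ℓ := by
  have hd := (hcd.len_pos ℓ).le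
  have hL : (0:ℝ) ≤ (ℓ:ℝ) := Nat.cast_nonneg ℓ
  have h := k1_range hL
  rw [hcd.bL]
  nlinarith [h.1, h.2]

lemma CD.a_le_aR (hcd : CD a b) (ℓ : ℕ) : a ℓ ≤ a (2*ℓ+2) := by
  have hd := (hcd.len_pos ℓ).le
  have hL : (0:ℝ) ≤ (ℓ:ℝ) := Nat.cast_nonneg ℓ
  have h := k2_range hL
  rw [hcd.aR]
  nlinarith [h.1, h.2]

lemma CD.bR_le_b (hcd : CD a b) (ℓ : ℕ) : b (2*ℓ+2) ≤ b ℓ := (hcd.bR ℓ).le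

/-- gap between the two children -/
lemma CD.gap (hcd : CD a b) (ℓ : ℕ) :
    b (2*ℓ+1) + (7/16) * (b ℓ - a ℓ) ≤ a (2*ℓ+2) := by
  have hd := (hcd.len_pos ℓ).le
  have hL : (0:ℝ) ≤ (ℓ:ℝ) := Nat.cast_nonneg ℓ
  have h1 := k1_range hL
  have h2 := k2_range hL
  rw [hcd.bL, hcd.aR]
  nlinarith [h1.2, h2.2]

/-- any node of positive level is a child -/
lemma child_decomp {n ℓ : ℕ} (h : lev (n+1) ℓ) :
    ∃ m, lev n m ∧ (ℓ = 2*m+1 ∨ ℓ = 2*m+2) := by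
  have hℓ : 1 ≤ ℓ := by
    obtain ⟨h1, h2⟩ := h
    have : (2:ℕ) ≤ 2^(n+1) := by
      calc (2:ℕ) = 2^1 := by norm_num
      _ ≤ 2^(n+1) := Nat.pow_le_pow_right (by norm_num) (by omega)
    omega
  rcases Nat.even_or_odd ℓ with ⟨m, hm⟩ | ⟨m, hm⟩
  · have e : ℓ = 2*(m-1)+2 := by omega
    rw [e] at h
    obtain ⟨n', hn', hm'⟩ := lev_right_parent h
    have : n' = n := by omega
    exact ⟨m-1, this ▸ hm', Or.inr e⟩
  · have e : ℓ = 2*m+1 := by omega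
    rw [e] at h
    obtain ⟨n', hn', hm'⟩ := lev_left_parent h
    have : n' = n := by omega
    exact ⟨m, this ▸ hm', Or.inl e⟩

lemma CD.child_sub (hcd : CD a b) {m ℓ : ℕ} (h : ℓ = 2*m+1 ∨ ℓ = 2*m+2) :
    a m ≤ a ℓ ∧ b ℓ ≤ b m := by
  rcases h with rfl | rfl
  · exact ⟨hcd.a_le_aL m, hcd.bL_le_b m⟩
  · exact ⟨hcd.a_le_aR m, hcd.bR_le_b m⟩

/-- separation of distinct same-level intervals -/
lemma CD.sep (hcd : CD a b) : ∀ n ℓ ℓ', lev n ℓ → lev n ℓ' → ℓ < ℓ' →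
    b ℓ + (7/12) * (1/4:ℝ)^n ≤ a ℓ' := by
  intro n
  induction n with
  | zero =>
    intro ℓ ℓ' h h' hlt
    have : ℓ = 0 := by obtain ⟨h1, h2⟩ := h; omega
    have : ℓ' = 0 := by obtain ⟨h1, h2⟩ := h'; omega
    omega
  | succ n ih =>
    intro ℓ ℓ' h h' hlt
    obtain ⟨m, hm, hc⟩ := child_decomp h
    obtain ⟨m', hm', hc'⟩ := child_decomp h'
    have hmm : m ≤ m' := by omega
    rcases Nat.eq_or_lt_of_le hmm with rfl | hlt'
    · -- same parent: must be sibling pair (left, right)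
      have hc1 : ℓ = 2*m+1 := by omega
      have hc2 : ℓ' = 2*m+2 := by omega
      subst hc1; subst hc2
      have hgap := hcd.gap m
      have hlen := hcd.len_lower hm
      have : (7/12) * (1/4:ℝ)^(n+1) ≤ (7/16) * (b m - a m) := by
        have h4 : (7/12) * (1/4:ℝ)^(n+1) = (7/16) * ((1/3) * (1/4:ℝ)^n) := by ring
        rw [h4]
        nlinarith
      linarith
    · -- different parents
      have h1 := (hcd.child_sub hc).2
      have h2 := (hcd.child_sub hc').1
      have h3 := ih m m' hm hm' hlt'
      have h4 : (7/12) * (1/4:ℝ)^(n+1) ≤ (7/12) * (1/4:ℝ)^n := by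
        have e : (1/4:ℝ)^(n+1) = (1/4:ℝ)^n * (1/4) := by ring
        have : (0:ℝ) ≤ (1/4:ℝ)^n := by positivity
        rw [e]; nlinarith
      linarith

/-- distinct same-level intervals are disjoint (given a common point) -/
lemma CD.level_unique (hcd : CD a b) {n ℓ ℓ' : ℕ} (h : lev n ℓ) (h' : lev n ℓ')
    {x : ℝ} (hx : x ∈ Set.Icc (a ℓ) (b ℓ)) (hx' : x ∈ Set.Icc (a ℓ') (b ℓ')) : ℓ = ℓ' := by
  by_contra hne
  have hpos : (0:ℝ) < (7/12) * (1/4:ℝ)^n := by positivity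
  rcases Nat.lt_or_ge ℓ ℓ' with hlt | hge
  · have := hcd.sep n ℓ ℓ' h h' hlt
    have := hx.2; have := hx'.1
    linarith
  · have hlt : ℓ' < ℓ := by omega
    have := hcd.sep n ℓ' ℓ h' h hlt
    have := hx'.2; have := hx.1
    linarith


/-- membership in the limit set, abstractly -/
def memF (a b : ℕ → ℝ) (x : ℝ) : Prop :=
  ∀ n, 1 ≤ n → ∃ ℓ, lev n ℓ ∧ x ∈ Set.Icc (a ℓ) (b ℓ)

/-- the address of `x` at level `n` -/
noncomputable def addr (b : ℕ → ℝ) (x : ℝ) : ℕ → ℕ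
  | 0 => 0
  | n+1 => if x ≤ b (2 * addr b x n + 1) then 2 * addr b x n + 1 else 2 * addr b x n + 2

lemma addr_lev (b : ℕ → ℝ) (x : ℝ) : ∀ n, lev n (addr b x n) := by
  intro n
  induction n with
  | zero => exact lev_zero
  | succ n ih =>
    show lev (n+1) (if x ≤ b (2 * addr b x n + 1) then 2 * addr b x n + 1 else 2 * addr b x n + 2)
    split
    · exact lev_left ih
    · exact lev_right ih

lemma CD.addr_correct (hcd : CD a b) {x : ℝ} (hx : memF a b x) :
    ∀ n, x ∈ Set.Icc (a (addr b x n)) (b (addr b x n)) := by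
  intro n
  induction n with
  | zero =>
    obtain ⟨ℓ, hℓ, hxℓ⟩ := hx 1 le_rfl
    have hcase : ℓ = 1 ∨ ℓ = 2 := by
      obtain ⟨h1, h2⟩ := hℓ; norm_num at h1 h2; omega
    show x ∈ Set.Icc (a 0) (b 0)
    rcases hcase with rfl | rfl
    · have := hcd.child_sub (m := 0) (Or.inl rfl)
      exact ⟨le_trans this.1 hxℓ.1, le_trans hxℓ.2 this.2⟩
    · have := hcd.child_sub (m := 0) (Or.inr rfl)
      exact ⟨le_trans this.1 hxℓ.1, le_trans hxℓ.2 this.2⟩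
  | succ n ih =>
    obtain ⟨m, hm, hxm⟩ := hx (n+1) (by omega)
    obtain ⟨p, hp, hc⟩ := child_decomp hm
    have hxp : x ∈ Set.Icc (a p) (b p) := by
      have := hcd.child_sub hc
      exact ⟨le_trans this.1 hxm.1, le_trans hxm.2 this.2⟩
    have hpA : p = addr b x n := hcd.level_unique hp (addr_lev b x n) hxp ih
    rw [hpA] at hc
    have e : addr b x (n+1) = if x ≤ b (2 * addr b x n + 1) then 2 * addr b x n + 1
        else 2 * addr b x n + 2 := rfl
    rcases hc with rfl | rfl
    · rw [e, if_pos hxm.2]; exact hxm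
    · have hgap := hcd.gap (addr b x n)
      have hlen := hcd.len_pos (addr b x n)
      have hneg : ¬ x ≤ b (2*(addr b x n)+1) := by
        have := hxm.1
        push_neg
        nlinarith
      rw [e, if_neg hneg]; exact hxm

lemma CD.addr_agree (hcd : CD a b) {x y : ℝ} (hx : memF a b x) (hy : memF a b y)
    {n : ℕ} (h : |x - y| < (7/12) * (1/4:ℝ)^n) : addr b x n = addr b y n := by
  by_contra hne
  have hγ : (0:ℝ) < (7/12) * (1/4:ℝ)^n := by positivity
  have hx' := hcd.addr_correct hx n
  have hy' := hcd.addr_correct hy n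
  rcases Nat.lt_or_ge (addr b x n) (addr b y n) with hlt | hge
  · have := hcd.sep n _ _ (addr_lev b x n) (addr_lev b y n) hlt
    have h1 := hx'.2; have h2 := hy'.1
    have : x + (7/12) * (1/4:ℝ)^n ≤ y := by linarith
    have : |x - y| ≥ (7/12) * (1/4:ℝ)^n := by
      rw [abs_sub_comm, abs_of_nonneg (by linarith)]; linarith
    linarith
  · have hlt : addr b y n < addr b x n := by omega
    have := hcd.sep n _ _ (addr_lev b y n) (addr_lev b x n) hlt
    have h1 := hy'.2; have h2 := hx'.1
    have : y + (7/12) * (1/4:ℝ)^n ≤ x := by linarith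
    have : |x - y| ≥ (7/12) * (1/4:ℝ)^n := by
      rw [abs_of_nonneg (by linarith)]; linarith
    linarith

/-- the position function -/
noncomputable def tfun (b : ℕ → ℝ) (x : ℝ) (n : ℕ) : ℝ :=
  ((addr b x n : ℝ) + 1 - 2^n) / 2^n

lemma tfun_zero (b : ℕ → ℝ) (x : ℝ) : tfun b x 0 = 0 := by
  simp [tfun, addr]

lemma tfun_nonneg (b : ℕ → ℝ) (x : ℝ) (n : ℕ) : 0 ≤ tfun b x n := by
  have h := (addr_lev b x n).1
  have : ((2:ℝ))^n ≤ (addr b x n : ℝ) + 1 := by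
    have := (Nat.cast_le (α := ℝ)).2 h
    push_cast at this
    linarith
  have h2 : (0:ℝ) < 2^n := by positivity
  unfold tfun
  apply div_nonneg (by linarith) h2.le

lemma tfun_le_one (b : ℕ → ℝ) (x : ℝ) (n : ℕ) : tfun b x n ≤ 1 := by
  have h := (addr_lev b x n).2
  have : ((addr b x n : ℝ)) + 2 ≤ 2^(n+1) := by
    have := (Nat.cast_le (α := ℝ)).2 h
    push_cast at this
    linarith
  have h2 : (0:ℝ) < 2^n := by positivity
  unfold tfun
  rw [div_le_one h2]
  have e : (2:ℝ)^(n+1) = 2 * 2^n := by ring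
  nlinarith

lemma tfun_succ (b : ℕ → ℝ) (x : ℝ) (n : ℕ) :
    tfun b x (n+1) = tfun b x n ∨ tfun b x (n+1) = tfun b x n + (1/2:ℝ)^(n+1) := by
  have h2 : (0:ℝ) < 2^n := by positivity
  have e : addr b x (n+1) = if x ≤ b (2 * addr b x n + 1) then 2 * addr b x n + 1
      else 2 * addr b x n + 2 := rfl
  unfold tfun
  rw [e]
  split
  · left
    push_cast
    field_simp
    ring
  · right
    push_cast
    rw [div_pow, one_pow]
    field_simp
    ring

lemma tfun_mono (b : ℕ → ℝ) (x : ℝ) : Monotone (tfun b x) := by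
  apply monotone_nat_of_le_succ
  intro n
  rcases tfun_succ b x n with h | h
  · rw [h]
  · rw [h]
    have : (0:ℝ) < (1/2:ℝ)^(n+1) := by positivity
    linarith

lemma tfun_upper (b : ℕ → ℝ) (x : ℝ) {n m : ℕ} (h : n ≤ m) :
    tfun b x m ≤ tfun b x n + (1/2:ℝ)^n - (1/2:ℝ)^m := by
  induction m, h using Nat.le_induction with
  | base => simp
  | succ m hm ih =>
    have e : (1/2:ℝ)^m = 2 * (1/2:ℝ)^(m+1) := by ring
    rcases tfun_succ b x m with h | h
    · rw [h]
      have : (0:ℝ) < (1/2:ℝ)^(m+1) := by positivity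
      linarith
    · rw [h]; linarith

/-- the coding map -/
noncomputable def gmap (b : ℕ → ℝ) (x : ℝ) : ℝ := ⨆ n, tfun b x n

lemma tfun_bdd (b : ℕ → ℝ) (x : ℝ) : BddAbove (Set.range (tfun b x)) := by
  refine ⟨1, ?_⟩
  rintro _ ⟨n, rfl⟩
  exact tfun_le_one b x n

lemma gmap_ge (b : ℕ → ℝ) (x : ℝ) (n : ℕ) : tfun b x n ≤ gmap b x :=
  le_ciSup (tfun_bdd b x) n

lemma gmap_le (b : ℕ → ℝ) (x : ℝ) (n : ℕ) : gmap b x ≤ tfun b x n + (1/2:ℝ)^n := by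
  apply ciSup_le
  intro m
  rcases le_total m n with h | h
  · have : (0:ℝ) < (1/2:ℝ)^n := by positivity
    have := tfun_mono b x h
    linarith
  · have := tfun_upper b x h
    have : (0:ℝ) < (1/2:ℝ)^m := by positivity
    linarith [tfun_upper b x h]

lemma gmap_mem (b : ℕ → ℝ) (x : ℝ) : gmap b x ∈ Set.Icc (0:ℝ) 1 := by
  constructor
  · have := gmap_ge b x 0
    rw [tfun_zero] at this
    exact this
  · have := gmap_le b x 0
    rw [tfun_zero] at this
    norm_num at this
    exact this

lemma gmap_close (b : ℕ → ℝ) {x y : ℝ} {n : ℕ} (h : addr b x n = addr b y n) :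
    |gmap b x - gmap b y| ≤ (1/2:ℝ)^n := by
  have ht : tfun b x n = tfun b y n := by unfold tfun; rw [h]
  have h1 := gmap_ge b x n
  have h2 := gmap_ge b y n
  have h3 := gmap_le b x n
  have h4 := gmap_le b y n
  rw [abs_le]
  constructor <;> linarith

/-- the Hölder estimate -/
lemma CD.holder (hcd : CD a b) {x y : ℝ} (hx : memF a b x) (hy : memF a b y) :
    |gmap b x - gmap b y| ≤ 4 * Real.sqrt |x - y| := by
  classical
  rcases eq_or_ne x y with rfl | hne
  · simp
  have hD : 0 < |x - y| := by
    rw [abs_pos]; intro h; exact hne (by linarith)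
  have hex : ∃ n : ℕ, (7/12) * (1/4:ℝ)^n ≤ |x - y| := by
    obtain ⟨n, hn⟩ := exists_pow_lt_of_lt_one (mul_pos (by norm_num : (0:ℝ) < 12/7) hD)
      (by norm_num : (1/4:ℝ) < 1)
    exact ⟨n, by linarith⟩
  set N := Nat.find hex with hN
  have hNle : (7/12) * (1/4:ℝ)^N ≤ |x - y| := Nat.find_spec hex
  match hNeq : N with
  | 0 =>
    -- |x-y| ≥ 7/12, and |g x - g y| ≤ 1
    norm_num at hNle
    have hg1 := gmap_mem b x
    have hg2 := gmap_mem b y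
    have h1 : |gmap b x - gmap b y| ≤ 1 := by
      rw [abs_le]
      constructor <;> [linarith [hg1.1, hg2.2]; linarith [hg1.2, hg2.1]]
    have h2 : (1/2:ℝ) ≤ Real.sqrt |x - y| := by
      rw [Real.le_sqrt (by norm_num) hD.le]
      nlinarith
    linarith
  | Nat.succ m =>
    have hmlt : ¬ ((7/12) * (1/4:ℝ)^m ≤ |x - y|) := Nat.find_min hex (by omega)
    push_neg at hmlt
    have hagree := hcd.addr_agree hx hy hmlt
    have hclose := gmap_close b hagree
    have hNle' : (7/48) * (1/4:ℝ)^m ≤ |x - y| := by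
      calc (7/48) * (1/4:ℝ)^m = (7/12) * (1/4:ℝ)^(m+1) := by ring
        _ ≤ _ := hNle
    have hsq : (1/4:ℝ) * (1/2:ℝ)^m ≤ Real.sqrt |x - y| := by
      rw [Real.le_sqrt (by positivity) hD.le]
      have e : ((1/4:ℝ) * (1/2:ℝ)^m)^2 = (1/16) * (1/4:ℝ)^m := by
        rw [mul_pow, ← pow_mul, pow_mul']
        norm_num
      rw [e]
      have : (0:ℝ) ≤ (1/4:ℝ)^m := by positivity
      nlinarith
    calc |gmap b x - gmap b y| ≤ (1/2:ℝ)^m := hclose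
      _ = 4 * ((1/4) * (1/2:ℝ)^m) := by ring
      _ ≤ 4 * Real.sqrt |x - y| := by linarith


/-- dyadic position sequence for `t` -/
noncomputable def pseq (t : ℝ) (n : ℕ) : ℕ := min (Nat.floor (t * 2^n)) (2^n - 1)

noncomputable def lseq (t : ℝ) (n : ℕ) : ℕ := pseq t n + (2^n - 1)

lemma pow_pos' (n : ℕ) : 1 ≤ 2^n := Nat.one_le_two_pow

lemma lseq_lev (t : ℝ) (n : ℕ) : lev n (lseq t n) := by
  have h1 := pow_pos' n
  have h2 : (2:ℕ)^(n+1) = 2*2^n := by ring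
  have h3 : pseq t n ≤ 2^n - 1 := min_le_right _ _
  unfold lseq
  constructor <;> omega

lemma pseq_step {t : ℝ} (ht : 0 ≤ t) (n : ℕ) :
    pseq t (n+1) = 2 * pseq t n ∨ pseq t (n+1) = 2 * pseq t n + 1 := by
  have hu : (0:ℝ) ≤ t * 2^n := by positivity
  have hA : (2:ℝ)^(n+1) = 2 * 2^n := by ring
  have h1 : 2 * Nat.floor (t * 2^n) ≤ Nat.floor (t * 2^(n+1)) := by
    apply Nat.le_floor
    push_cast
    rw [hA]
    have := Nat.floor_le hu
    nlinarith
  have h2 : Nat.floor (t * 2^(n+1)) < 2 * Nat.floor (t * 2^n) + 2 := by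
    rw [Nat.floor_lt (by positivity)]
    push_cast
    rw [hA]
    have := Nat.lt_floor_add_one (t * 2^n)
    nlinarith
  have h3 : (2:ℕ)^(n+1) = 2*2^n := by ring
  have h4 := pow_pos' n
  unfold pseq
  omega

lemma lseq_child (t : ℝ) (ht : 0 ≤ t) (n : ℕ) :
    lseq t (n+1) = 2 * lseq t n + 1 ∨ lseq t (n+1) = 2 * lseq t n + 2 := by
  have h3 : (2:ℕ)^(n+1) = 2*2^n := by ring
  have h4 := pow_pos' n
  rcases pseq_step ht n with h | h <;> unfold lseq <;> omega

lemma CD.lseq_nested (hcd : CD a b) {t : ℝ} (ht : 0 ≤ t) {n m : ℕ} (h : n ≤ m) :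
    a (lseq t n) ≤ a (lseq t m) ∧ b (lseq t m) ≤ b (lseq t n) := by
  induction m, h using Nat.le_induction with
  | base => exact ⟨le_rfl, le_rfl⟩
  | succ m hm ih =>
    have hc : lseq t (m+1) = 2 * lseq t m + 1 ∨ lseq t (m+1) = 2 * lseq t m + 2 :=
      lseq_child t ht m
    have := hcd.child_sub hc
    exact ⟨le_trans ih.1 this.1, le_trans this.2 ih.2⟩

lemma CD.surj (hcd : CD a b) {t : ℝ} (ht : t ∈ Set.Icc (0:ℝ) 1) :
    ∃ x, memF a b x ∧ gmap b x = t := by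
  obtain ⟨ht0, ht1⟩ := ht
  set x : ℝ := ⨆ n, a (lseq t n) with hx
  have hbdd : BddAbove (Set.range (fun n => a (lseq t n))) := by
    refine ⟨b (lseq t 0), ?_⟩
    rintro _ ⟨n, rfl⟩
    exact le_trans (hcd.a_le_b _) (hcd.lseq_nested ht0 (Nat.zero_le n)).2
  have hmem : ∀ n, x ∈ Set.Icc (a (lseq t n)) (b (lseq t n)) := by
    intro n
    constructor
    · exact le_ciSup hbdd n
    · apply ciSup_le
      intro m
      rcases le_total m n with h | h
      · exact le_trans (hcd.lseq_nested ht0 h).1 (hcd.a_le_b _)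
      · exact le_trans (hcd.a_le_b _) (hcd.lseq_nested ht0 h).2
  have hmemF : memF a b x := fun n _ => ⟨lseq t n, lseq_lev t n, hmem n⟩
  refine ⟨x, hmemF, ?_⟩
  have haddr : ∀ n, addr b x n = lseq t n := by
    intro n
    exact hcd.level_unique (addr_lev b x n) (lseq_lev t n) (hcd.addr_correct hmemF n) (hmem n)
  have htfun : ∀ n, tfun b x n = (pseq t n : ℝ) / 2^n := by
    intro n
    unfold tfun
    rw [haddr n]
    congr 1
    have h4 := pow_pos' n
    unfold lseq
    push_cast [Nat.cast_sub h4]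
    ring
  have hb1 : ∀ n, (pseq t n : ℝ) ≤ t * 2^n := by
    intro n
    calc (pseq t n : ℝ) ≤ (Nat.floor (t * 2^n) : ℝ) :=
          Nat.cast_le.2 (min_le_left _ _)
      _ ≤ t * 2^n := Nat.floor_le (by positivity)
  have hb2 : ∀ n, t * 2^n ≤ (pseq t n : ℝ) + 1 := by
    intro n
    rcases le_or_gt (Nat.floor (t * 2^n)) (2^n - 1) with h | h
    · have e : pseq t n = Nat.floor (t * 2^n) := min_eq_left h
      rw [e]
      exact (Nat.lt_floor_add_one _).le
    · have e : pseq t n = 2^n - 1 := min_eq_right h.le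
      rw [e]
      have h4 := pow_pos' n
      have : ((2^n - 1 : ℕ) : ℝ) = (2:ℝ)^n - 1 := by
        push_cast [Nat.cast_sub h4]
        ring
      rw [this]
      nlinarith [pow_pos (by norm_num : (0:ℝ) < 2) n]
  apply le_antisymm
  · apply ciSup_le
    intro n
    rw [htfun n]
    rw [div_le_iff₀ (by positivity : (0:ℝ) < 2^n)]
    exact hb1 n
  · apply le_of_forall_pos_le_add
    intro ε hε
    obtain ⟨n, hn⟩ := exists_pow_lt_of_lt_one hε (by norm_num : (1/2:ℝ) < 1)
    have h1 : t ≤ tfun b x n + (1/2:ℝ)^n := by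
      rw [htfun n]
      have hp : (0:ℝ) < 2^n := by positivity
      have he : (1/2:ℝ)^n = 1/2^n := by
        rw [div_pow]; norm_num
      rw [he, ← sub_le_iff_le_add, le_div_iff₀ hp]
      have hb := hb2 n
      have e2 : (t - 1/2^n) * 2^n = t * 2^n - 1 := by field_simp
      rw [e2]
      linarith
    have h2 := gmap_ge b x n
    linarith

open MeasureTheory MeasureTheory.Measure Filter Topology

lemma lev_iff (n ℓ : ℕ) : lev n ℓ ↔ (2^n - 1 ≤ ℓ ∧ ℓ ≤ 2^(n+1) - 2) := by
  have h1 := pow_pos' n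
  have h2 : (2:ℕ)^(n+1) = 2*2^n := by ring
  unfold lev
  omega

/-- upper bound: the Hausdorff measure vanishes above dimension 1/2 -/
lemma CD.measure_zero (hcd : CD a b) {F : Set ℝ} (hFsub : ∀ x ∈ F, memF a b x)
    {s : ℝ} (hs : 1/2 < s) : μH[s] F = 0 := by
  have hs0 : (0:ℝ) ≤ s := by linarith
  set r : ℕ → ℝ≥0∞ := fun n => ENNReal.ofReal (2 * (1/4:ℝ)^n) with hr_def
  have hr : Tendsto r atTop (𝓝 0) := by
    have h0 : Tendsto (fun n : ℕ => 2 * (1/4:ℝ)^n) atTop (𝓝 0) := by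
      simpa using (tendsto_pow_atTop_nhds_zero_of_lt_one
        (by norm_num : (0:ℝ) ≤ 1/4) (by norm_num : (1/4:ℝ) < 1)).const_mul 2
    have h1 := ENNReal.tendsto_ofReal h0
    rw [ENNReal.ofReal_zero] at h1
    exact h1
  have key := hausdorffMeasure_le_liminf_sum (ι := fun n : ℕ =>
      ↥(Finset.Icc (2^n - 1) (2^(n+1) - 2))) s F r hr
      (fun n i => Set.Icc (a i) (b i)) ?_ ?_
  · refine le_antisymm (le_trans key ?_) (zero_le)
    have hbound : ∀ᶠ n in atTop,
        (∑ i : ↥(Finset.Icc (2^n - 1) (2^(n+1) - 2)),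
          Metric.ediam (Set.Icc (a i.1) (b i.1)) ^ s)
          ≤ ENNReal.ofReal ((2:ℝ)^n * (2 * (1/4:ℝ)^n)^s) := by
      filter_upwards with n
      have hdiam : ∀ i : ↥(Finset.Icc (2^n - 1) (2^(n+1) - 2)),
          Metric.ediam (Set.Icc (a i.1) (b i.1)) ^ s ≤ ENNReal.ofReal ((2 * (1/4:ℝ)^n)^s) := by
        intro i
        have hi := Finset.mem_Icc.1 i.2
        have hlev : lev n i.1 := (lev_iff n i.1).2 hi
        rw [Real.ediam_Icc]
        rw [← ENNReal.ofReal_rpow_of_nonneg (by positivity) hs0]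
        apply ENNReal.rpow_le_rpow _ hs0
        exact ENNReal.ofReal_le_ofReal (by linarith [hcd.len_upper hlev])
      calc (∑ i : ↥(Finset.Icc (2^n - 1) (2^(n+1) - 2)),
            Metric.ediam (Set.Icc (a i.1) (b i.1)) ^ s)
          ≤ ∑ _i : ↥(Finset.Icc (2^n - 1) (2^(n+1) - 2)),
            ENNReal.ofReal ((2 * (1/4:ℝ)^n)^s) := Finset.sum_le_sum (fun i _ => hdiam i)
        _ = (Fintype.card ↥(Finset.Icc (2^n - 1) (2^(n+1) - 2))) •
            ENNReal.ofReal ((2 * (1/4:ℝ)^n)^s) := by rw [Finset.sum_const, Finset.card_univ]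
        _ = (2^n : ℕ) • ENNReal.ofReal ((2 * (1/4:ℝ)^n)^s) := by
            congr 1
            rw [Fintype.card_coe, Nat.card_Icc]
            have h1 := pow_pos' n
            have h2 : (2:ℕ)^(n+1) = 2*2^n := by ring
            omega
        _ = ENNReal.ofReal ((2:ℝ)^n * (2 * (1/4:ℝ)^n)^s) := by
            rw [nsmul_eq_mul, ENNReal.ofReal_mul (by positivity)]
            congr 1
            rw [← ENNReal.ofReal_natCast]
            congr 1
            push_cast
            ring
    have hlim : Tendsto (fun n : ℕ => ENNReal.ofReal ((2:ℝ)^n * (2 * (1/4:ℝ)^n)^s))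
        atTop (𝓝 0) := by
      have hq : (0:ℝ) ≤ 2 * (1/4:ℝ)^s := by positivity
      have hq1 : 2 * (1/4:ℝ)^s < 1 := by
        have h14 : ((1/4:ℝ))^s < (1/4:ℝ)^(1/2:ℝ) :=
          Real.rpow_lt_rpow_of_exponent_gt (by norm_num) (by norm_num) hs
        have he : (1/4:ℝ)^(1/2:ℝ) = 1/2 := by
          rw [show (1/4:ℝ) = (1/2)^(2:ℕ) by norm_num, ← Real.rpow_natCast (1/2:ℝ) 2,
            ← Real.rpow_mul (by norm_num)]
          norm_num
        rw [he] at h14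
        linarith
      have hre : Tendsto (fun n : ℕ => (2:ℝ)^s * (2 * (1/4:ℝ)^s)^n) atTop (𝓝 0) := by
        simpa using (tendsto_pow_atTop_nhds_zero_of_lt_one hq hq1).const_mul ((2:ℝ)^s)
      have heq : ∀ n : ℕ, (2:ℝ)^n * (2 * (1/4:ℝ)^n)^s = (2:ℝ)^s * (2 * (1/4:ℝ)^s)^n := by
        intro n
        rw [Real.mul_rpow (by norm_num) (by positivity), mul_pow,
          ← Real.rpow_natCast (1/4:ℝ) n, ← Real.rpow_natCast ((1/4:ℝ)^s) n,
          ← Real.rpow_mul (by norm_num), ← Real.rpow_mul (by norm_num), mul_comm s (n:ℝ)]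
        ring
      have := ENNReal.tendsto_ofReal hre
      simp only [ENNReal.ofReal_zero] at this
      apply this.congr
      intro n
      rw [heq n]
    calc liminf (fun n : ℕ => ∑ i : ↥(Finset.Icc (2^n - 1) (2^(n+1) - 2)),
          Metric.ediam (Set.Icc (a i.1) (b i.1)) ^ s) atTop
        ≤ liminf (fun n : ℕ => ENNReal.ofReal ((2:ℝ)^n * (2 * (1/4:ℝ)^n)^s)) atTop :=
          liminf_le_liminf hbound
      _ = 0 := hlim.liminf_eq
  · -- diameters bounded by r n
    filter_upwards with n
    intro i
    have hi := Finset.mem_Icc.1 i.2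
    have hlev : lev n i.1 := (lev_iff n i.1).2 hi
    rw [Real.ediam_Icc]
    exact ENNReal.ofReal_le_ofReal (by linarith [hcd.len_upper hlev])
  · -- covering
    rw [eventually_atTop]
    refine ⟨1, fun n hn => ?_⟩
    intro x hx
    obtain ⟨ℓ, hℓ, hxℓ⟩ := hFsub x hx n hn
    rw [Set.mem_iUnion]
    exact ⟨⟨ℓ, Finset.mem_Icc.2 ((lev_iff n ℓ).1 hℓ)⟩, hxℓ⟩

/-- the Hölder property of the coding map -/
lemma CD.holderOn (hcd : CD a b) {F : Set ℝ} (hFsub : ∀ x ∈ F, memF a b x) :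
    HolderOnWith 4 (1/2) (gmap b) F := by
  intro x hx y hy
  have h := hcd.holder (hFsub x hx) (hFsub y hy)
  have hD : (0:ℝ) ≤ |x - y| := abs_nonneg _
  rw [edist_dist, edist_dist, Real.dist_eq, Real.dist_eq]
  calc ENNReal.ofReal |gmap b x - gmap b y| ≤ ENNReal.ofReal (4 * Real.sqrt |x - y|) :=
        ENNReal.ofReal_le_ofReal h
    _ = ENNReal.ofReal 4 * ENNReal.ofReal (Real.sqrt |x - y|) :=
        ENNReal.ofReal_mul (by norm_num)
    _ = 4 * ENNReal.ofReal (|x - y| ^ ((1/2 : ℝ≥0) : ℝ)) := by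
        rw [Real.sqrt_eq_rpow]
        norm_num
    _ = 4 * ENNReal.ofReal |x - y| ^ ((1/2 : ℝ≥0) : ℝ) := by
        rw [ENNReal.ofReal_rpow_of_nonneg hD (by norm_num)]
end Ex51

open MeasureTheory Topology Ex51 in
/-- Example 5.1: the Cantor-type construction driven by
`k_ℓ = ((ℓ+1)/(4ℓ+6), (2ℓ+5)/(8ℓ+16))` produces a limit set of Hausdorff dimension `1/2`. -/
theorem stmt_15
    (k1 k2 : ℕ → ℝ)
    (hk1 : ∀ ℓ : ℕ, k1 ℓ = ((ℓ : ℝ) + 1) / (4 * (ℓ : ℝ) + 6))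
    (hk2 : ∀ ℓ : ℕ, k2 ℓ = (2 * (ℓ : ℝ) + 5) / (8 * (ℓ : ℝ) + 16))
    (a b : ℕ → ℝ)
    (ha0 : a 0 = 0) (hb0 : b 0 = 1)
    (haL : ∀ ℓ : ℕ, a (2 * ℓ + 1) = a ℓ)
    (hbL : ∀ ℓ : ℕ, b (2 * ℓ + 1) = a ℓ + k1 ℓ * (b ℓ - a ℓ))
    (haR : ∀ ℓ : ℕ, a (2 * ℓ + 2) = b ℓ - k2 ℓ * (b ℓ - a ℓ))
    (hbR : ∀ ℓ : ℕ, b (2 * ℓ + 2) = b ℓ)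
    (F : Set ℝ)
    (hF : F = ⋂ (n : ℕ) (_ : 1 ≤ n),
      ⋃ ℓ ∈ Finset.Icc (2 ^ n - 1) (2 ^ (n + 1) - 2), Set.Icc (a ℓ) (b ℓ)) :
    dimH F = 1 / 2 := by
  have hcd : CD a b := by
    refine ⟨ha0, hb0, haL, ?_, ?_, hbR⟩
    · intro ℓ; rw [hbL ℓ, hk1 ℓ]
    · intro ℓ; rw [haR ℓ, hk2 ℓ]
  have hiff : ∀ x, x ∈ F ↔ memF a b x := by
    intro x
    rw [hF]
    simp only [Set.mem_iInter, Set.mem_iUnion, Finset.mem_Icc, exists_prop, memF]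
    constructor
    · intro h n hn
      obtain ⟨ℓ, hℓ, hx⟩ := h n hn
      exact ⟨ℓ, (lev_iff n ℓ).2 hℓ, hx⟩
    · intro h n hn
      obtain ⟨ℓ, hℓ, hx⟩ := h n hn
      exact ⟨ℓ, (lev_iff n ℓ).1 hℓ, hx⟩
  have hFsub : ∀ x ∈ F, memF a b x := fun x hx => (hiff x).1 hx
  have hhalf : ((1/2 : ℝ≥0) : ℝ≥0∞) = 1/2 := by norm_num
  apply le_antisymm
  · -- upper bound
    apply dimH_le
    intro d hd
    rcases le_or_gt ((d:ℝ)) (1/2) with hle | hlt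
    · rw [← hhalf]
      exact_mod_cast (by exact_mod_cast hle : d ≤ (1/2 : ℝ≥0))
    · exfalso
      have := hcd.measure_zero hFsub hlt
      rw [this] at hd
      simp at hd
  · -- lower bound
    have hh := (hcd.holderOn hFsub).dimH_image_le (by norm_num : 0 < (1/2:ℝ≥0))
    have him : Set.Icc (0:ℝ) 1 ⊆ gmap b '' F := by
      intro t ht
      obtain ⟨x, hxm, hgx⟩ := hcd.surj ht
      exact ⟨x, (hiff x).2 hxm, hgx⟩
    have h1 : (1:ℝ≥0∞) ≤ dimH (gmap b '' F) := by
      have hmono := dimH_mono him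
      have hIcc : dimH (Set.Icc (0:ℝ) 1) = 1 := by
        rw [Real.dimH_of_mem_nhds
          (Icc_mem_nhds (by norm_num) (by norm_num) : Set.Icc (0:ℝ) 1 ∈ 𝓝 (1/2:ℝ))]
        simp
      rw [hIcc] at hmono
      exact hmono
    have h2 : (1:ℝ≥0∞) ≤ dimH F / ((1/2 : ℝ≥0) : ℝ≥0∞) := le_trans h1 hh
    rw [ENNReal.le_div_iff_mul_le (Or.inl (by norm_num)) (Or.inl (by norm_num)), one_mul,
      hhalf] at h2
    exact h2
end

section
/- Let {q_ℓ}_{ℓ≥0} be any sequence of real numbers with 1/8 ≤ q_ℓ ≤ 3/8 for all ℓ, and let the Cantor-type construction be driven by the sequence k_ℓ = (q_ℓ, 1/2 − q_ℓ). Then the resulting limit set F ⊆ [0,1] satisfies 1/3 ≤ dim_H(F) ≤ log(2)/log(8/3). -/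
namespace Stmt16

def idx : List Bool → ℕ
  | [] => 0
  | c :: s => 2 * idx s + (if c then 2 else 1)

lemma idx_false (s : List Bool) : idx (false :: s) = 2 * idx s + 1 := by simp [idx]
lemma idx_true (s : List Bool) : idx (true :: s) = 2 * idx s + 2 := by simp [idx]

lemma idx_range (s : List Bool) :
    2 ^ s.length - 1 ≤ idx s ∧ idx s ≤ 2 ^ (s.length + 1) - 2 := by
  induction s with
  | nil => simp [idx]
  | cons c s ih =>
    have h2 : (2:ℕ)^(s.length+1) = 2 * 2^s.length := by ring
    have h3 : (2:ℕ)^(s.length+2) = 4 * 2^s.length := by ring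
    have hp : 1 ≤ (2:ℕ)^s.length := Nat.one_le_two_pow
    cases c <;> simp only [idx_false, idx_true, List.length_cons] <;> omega

lemma idx_surj : ∀ n ℓ, 2 ^ n - 1 ≤ ℓ → ℓ ≤ 2 ^ (n + 1) - 2 →
    ∃ s : List Bool, s.length = n ∧ idx s = ℓ := by
  intro n
  induction n with
  | zero => intro ℓ h1 h2; exact ⟨[], rfl, by simp [idx]; omega⟩
  | succ n ih =>
    intro ℓ h1 h2
    have hp : 1 ≤ (2:ℕ)^n := Nat.one_le_two_pow
    have h2' : (2:ℕ)^(n+1) = 2 * 2^n := by ring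
    have h3 : (2:ℕ)^(n+2) = 4 * 2^n := by ring
    rcases Nat.even_or_odd ℓ with ⟨m, hm⟩ | ⟨m, hm⟩
    · obtain ⟨s, hs, hi⟩ := ih (m - 1) (by omega) (by omega)
      exact ⟨true :: s, by simp [hs], by rw [idx_true, hi]; omega⟩
    · obtain ⟨s, hs, hi⟩ := ih m (by omega) (by omega)
      exact ⟨false :: s, by simp [hs], by rw [idx_false, hi]; omega⟩

noncomputable def U : List Bool → ℝ
  | [] => 0
  | c :: s => U s + if c then ((1:ℝ)/2)^(s.length+1) else 0

noncomputable def V (s : List Bool) : ℝ := U s + ((1:ℝ)/2)^s.length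

lemma half_split (n : ℕ) : ((1:ℝ)/2)^(n+1) + ((1:ℝ)/2)^(n+1) = ((1:ℝ)/2)^n := by ring
lemma half_pos' (n : ℕ) : (0:ℝ) < ((1:ℝ)/2)^n := by positivity

lemma U_nil : U [] = 0 := rfl
lemma U_cons (c : Bool) (s : List Bool) :
    U (c :: s) = U s + if c then ((1:ℝ)/2)^(s.length+1) else 0 := rfl
lemma U_cons_false (s : List Bool) : U (false :: s) = U s := by rw [U_cons]; simp
lemma U_cons_true (s : List Bool) : U (true :: s) = U s + ((1:ℝ)/2)^(s.length+1) := by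
  rw [U_cons]; simp
lemma V_nil : V [] = 1 := by simp [V, U_nil]
lemma V_cons_false (s : List Bool) : V (false :: s) = U s + ((1:ℝ)/2)^(s.length+1) := by
  rw [V, U_cons_false]; simp
lemma V_cons_true (s : List Bool) : V (true :: s) = V s := by
  rw [V, U_cons_true, V]
  have := half_split s.length
  simp only [List.length_cons]
  linarith
lemma U_le_V (s : List Bool) : U s ≤ V s := by
  have := half_pos' s.length
  rw [V]; linarith
lemma U_le_U_cons (c : Bool) (s : List Bool) : U s ≤ U (c :: s) := by
  have := half_pos' (s.length+1)
  cases c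
  · rw [U_cons_false]
  · rw [U_cons_true]; linarith
lemma V_cons_le_V (c : Bool) (s : List Bool) : V (c :: s) ≤ V s := by
  have := half_split s.length
  have := half_pos' (s.length+1)
  cases c
  · rw [V_cons_false, V]; linarith
  · rw [V_cons_true]

lemma UV_append (t s : List Bool) : U s ≤ U (t ++ s) ∧ V (t ++ s) ≤ V s := by
  induction t with
  | nil => simp
  | cons c t ih =>
    exact ⟨le_trans ih.1 (U_le_U_cons c (t ++ s)), le_trans (V_cons_le_V c (t ++ s)) ih.2⟩

lemma U_nonneg (s : List Bool) : 0 ≤ U s := by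
  have := (UV_append s []).1; rwa [U_nil, List.append_nil] at this
lemma V_le_one (s : List Bool) : V s ≤ 1 := by
  have := (UV_append s []).2; rwa [V_nil, List.append_nil] at this
lemma U_le_one (s : List Bool) : U s ≤ 1 := (U_le_V s).trans (V_le_one s)
lemma V_nonneg (s : List Bool) : 0 ≤ V s := (U_nonneg s).trans (U_le_V s)
lemma V_sub_U (s : List Bool) : V s - U s = ((1:ℝ)/2)^s.length := by rw [V]; ring

structure Data where
  q : ℕ → ℝ
  a : ℕ → ℝ
  b : ℕ → ℝ
  hq1 : ∀ ℓ, 1/8 ≤ q ℓ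
  hq2 : ∀ ℓ, q ℓ ≤ 3/8
  ha0 : a 0 = 0
  hb0 : b 0 = 1
  haL : ∀ ℓ, a (2*ℓ+1) = a ℓ
  hbL : ∀ ℓ, b (2*ℓ+1) = a ℓ + q ℓ * (b ℓ - a ℓ)
  haR : ∀ ℓ, a (2*ℓ+2) = b ℓ - (1/2 - q ℓ) * (b ℓ - a ℓ)
  hbR : ∀ ℓ, b (2*ℓ+2) = b ℓ

namespace Data

variable (D : Data)

noncomputable def A (s : List Bool) : ℝ := D.a (idx s)
noncomputable def B (s : List Bool) : ℝ := D.b (idx s)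

lemma A_nil : D.A [] = 0 := D.ha0
lemma B_nil : D.B [] = 1 := D.hb0
lemma A_cons_false (s : List Bool) : D.A (false :: s) = D.A s := by
  rw [A, idx_false]; exact D.haL _
lemma B_cons_false (s : List Bool) :
    D.B (false :: s) = D.A s + D.q (idx s) * (D.B s - D.A s) := by
  rw [B, idx_false]; exact D.hbL _
lemma A_cons_true (s : List Bool) :
    D.A (true :: s) = D.B s - (1/2 - D.q (idx s)) * (D.B s - D.A s) := by
  rw [A, idx_true]; exact D.haR _
lemma B_cons_true (s : List Bool) : D.B (true :: s) = D.B s := by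
  rw [B, idx_true]; exact D.hbR _

lemma len_bounds (s : List Bool) :
    ((1:ℝ)/8)^s.length ≤ D.B s - D.A s ∧ D.B s - D.A s ≤ ((3:ℝ)/8)^s.length := by
  induction s with
  | nil => rw [A_nil, B_nil]; norm_num
  | cons c s ih =>
    have hq1 := D.hq1 (idx s); have hq2 := D.hq2 (idx s)
    have h18 : (0:ℝ) < ((1:ℝ)/8)^s.length := by positivity
    have h38 : (0:ℝ) < ((3:ℝ)/8)^s.length := by positivity
    have e1 : ((1:ℝ)/8)^(s.length+1) = (1/8) * ((1:ℝ)/8)^s.length := by ring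
    have e3 : ((3:ℝ)/8)^(s.length+1) = (3/8) * ((3:ℝ)/8)^s.length := by ring
    cases c
    · rw [List.length_cons, e1, e3, A_cons_false, B_cons_false]
      constructor <;> nlinarith [ih.1, ih.2]
    · rw [List.length_cons, e1, e3, A_cons_true, B_cons_true]
      constructor <;> nlinarith [ih.1, ih.2]

lemma len_pos (s : List Bool) : 0 < D.B s - D.A s :=
  lt_of_lt_of_le (by positivity) (D.len_bounds s).1

lemma A_le_B (s : List Bool) : D.A s ≤ D.B s := by linarith [D.len_pos s]

lemma nest (c : Bool) (s : List Bool) : D.A s ≤ D.A (c :: s) ∧ D.B (c :: s) ≤ D.B s := by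
  have hq1 := D.hq1 (idx s); have hq2 := D.hq2 (idx s)
  have hl := D.len_pos s
  cases c
  · rw [A_cons_false, B_cons_false]
    constructor
    · linarith
    · nlinarith
  · rw [A_cons_true, B_cons_true]
    constructor
    · nlinarith
    · linarith

lemma gap (s : List Bool) :
    D.B (false :: s) + (1/2) * (D.B s - D.A s) = D.A (true :: s) := by
  rw [B_cons_false, A_cons_true]; ring

lemma nest_append (t s : List Bool) : D.A s ≤ D.A (t ++ s) ∧ D.B (t ++ s) ≤ D.B s := by
  induction t with
  | nil => simp
  | cons c t ih =>
    exact ⟨le_trans ih.1 (D.nest c (t ++ s)).1, le_trans (D.nest c (t ++ s)).2 ih.2⟩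

lemma mem_of_append {t s : List Bool} {x : ℝ}
    (hx : x ∈ Set.Icc (D.A (t ++ s)) (D.B (t ++ s))) : x ∈ Set.Icc (D.A s) (D.B s) :=
  ⟨le_trans (D.nest_append t s).1 hx.1, le_trans hx.2 (D.nest_append t s).2⟩

lemma disjoint : ∀ (s t : List Bool), s.length = t.length → s ≠ t → ∀ x : ℝ,
    x ∈ Set.Icc (D.A s) (D.B s) → x ∈ Set.Icc (D.A t) (D.B t) → False := by
  intro s
  induction s with
  | nil => intro t h hne; cases t <;> simp_all
  | cons c s ih =>
    intro t hlen hne x hxs hxt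
    cases t with
    | nil => simp at hlen
    | cons d t =>
      simp only [List.length_cons, Nat.add_right_cancel_iff] at hlen
      by_cases hst : s = t
      · subst hst
        have hcd : c ≠ d := fun h => hne (by rw [h])
        have hgap := D.gap s
        have hl := D.len_pos s
        -- one of c,d is false and other true
        have h1 : x ∈ Set.Icc (D.A (false :: s)) (D.B (false :: s)) ∧
            x ∈ Set.Icc (D.A (true :: s)) (D.B (true :: s)) := by
          cases c <;> cases d <;> simp_all <;> exact ⟨hxs, hxt⟩
        have := h1.1.2; have := h1.2.1
        linarith
      · exact ih t hlen hst x (D.mem_of_append (t := [c]) hxs) (D.mem_of_append (t := [d]) hxt)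

lemma ancestor {s t : List Bool} {x : ℝ} (hxs : x ∈ Set.Icc (D.A s) (D.B s))
    (hxt : x ∈ Set.Icc (D.A t) (D.B t)) (hlen : t.length ≤ s.length) :
    t = s.drop (s.length - t.length) := by
  by_contra hne
  have hsplit : s.take (s.length - t.length) ++ s.drop (s.length - t.length) = s :=
    List.take_append_drop _ _
  have hx' : x ∈ Set.Icc (D.A (s.drop (s.length - t.length))) (D.B (s.drop (s.length - t.length))) := by
    apply D.mem_of_append (t := s.take (s.length - t.length))
    rwa [hsplit]
  have hlen' : t.length = (s.drop (s.length - t.length)).length := by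
    rw [List.length_drop]; omega
  exact D.disjoint t _ hlen' hne x hxt hx'



noncomputable def f (x : ℝ) : ℝ :=
  sSup (Set.range fun s : List Bool => if x ∈ Set.Icc (D.A s) (D.B s) then U s else 0)

lemma f_bdd (x : ℝ) :
    BddAbove (Set.range fun s : List Bool => if x ∈ Set.Icc (D.A s) (D.B s) then U s else 0) := by
  refine ⟨1, ?_⟩
  rintro y ⟨s, rfl⟩
  dsimp only
  split_ifs
  · exact U_le_one s
  · norm_num

lemma eq_of_mem {s t : List Bool} {x : ℝ} (hlen : s.length = t.length)
    (hxs : x ∈ Set.Icc (D.A s) (D.B s)) (hxt : x ∈ Set.Icc (D.A t) (D.B t)) : s = t := by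
  by_contra hne
  exact D.disjoint s t hlen hne x hxs hxt

lemma chain {s t : List Bool} {x : ℝ} (hxs : x ∈ Set.Icc (D.A s) (D.B s))
    (hxt : x ∈ Set.Icc (D.A t) (D.B t)) : U t ≤ V s := by
  rcases le_total t.length s.length with h | h
  · have ht := D.ancestor hxs hxt h
    have key : U (s.drop (s.length - t.length)) ≤ U s := by
      have h2 := (UV_append (s.take (s.length - t.length)) (s.drop (s.length - t.length))).1
      rwa [List.take_append_drop] at h2
    rw [ht]
    exact key.trans (U_le_V s)
  · have hs := D.ancestor hxt hxs h
    have h2 := (UV_append (t.take (t.length - s.length)) (t.drop (t.length - s.length))).2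
    rw [List.take_append_drop] at h2
    rw [hs]
    exact (U_le_V t).trans h2

lemma f_mem {s : List Bool} {x : ℝ} (hx : x ∈ Set.Icc (D.A s) (D.B s)) :
    U s ≤ D.f x ∧ D.f x ≤ V s := by
  constructor
  · refine le_csSup (D.f_bdd x) ⟨s, ?_⟩
    dsimp only
    rw [if_pos hx]
  · refine csSup_le (Set.range_nonempty _) ?_
    rintro y ⟨t, rfl⟩
    dsimp only
    split_ifs with h
    · exact D.chain hx h
    · exact V_nonneg s

/-- predicate: x belongs to the nested construction at every generation -/
def InF (x : ℝ) : Prop :=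
  ∀ n : ℕ, 1 ≤ n → ∃ ℓ ∈ Finset.Icc (2^n - 1) (2^(n+1) - 2), x ∈ Set.Icc (D.a ℓ) (D.b ℓ)

lemma exists_level {x : ℝ} (hx : D.InF x) (n : ℕ) :
    ∃ s : List Bool, s.length = n ∧ x ∈ Set.Icc (D.A s) (D.B s) := by
  rcases Nat.eq_zero_or_pos n with rfl | hn
  · obtain ⟨ℓ, hℓ, hxl⟩ := hx 1 le_rfl
    rw [Finset.mem_Icc] at hℓ
    obtain ⟨s, hs, rfl⟩ := idx_surj 1 ℓ hℓ.1 hℓ.2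
    refine ⟨[], rfl, D.mem_of_append (t := s) ?_⟩
    rwa [List.append_nil]
  · obtain ⟨ℓ, hℓ, hxl⟩ := hx n hn
    rw [Finset.mem_Icc] at hℓ
    obtain ⟨s, hs, rfl⟩ := idx_surj n ℓ hℓ.1 hℓ.2
    exact ⟨s, hs, hxl⟩

lemma cube_root {n : ℕ} : (((1:ℝ)/8)^n) ^ ((1:ℝ)/3) = ((1:ℝ)/2)^n := by
  have h : ((1:ℝ)/8)^n = (((1:ℝ)/2)^n)^(3:ℕ) := by
    rw [← pow_mul, mul_comm, pow_mul]; norm_num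
  rw [h, ← Real.rpow_natCast (((1:ℝ)/2)^n) 3, ← Real.rpow_mul (by positivity)]
  norm_num

lemma holder_aux {x y : ℝ} (hx : D.InF x) (hy : D.InF y) :
    |D.f x - D.f y| ≤ 2 * |x - y| ^ ((1:ℝ)/3) := by
  classical
  rcases eq_or_ne x y with rfl | hne
  · simp
  · have habs : 0 < |x - y| := by
      rw [abs_pos, sub_ne_zero]; exact hne
    -- find N with (3/8)^N < |x - y|
    obtain ⟨N, hN⟩ := exists_pow_lt_of_lt_one habs (by norm_num : (3:ℝ)/8 < 1)
    set P : ℕ → Prop := fun n => ∃ s : List Bool, s.length = n ∧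
      x ∈ Set.Icc (D.A s) (D.B s) ∧ y ∈ Set.Icc (D.A s) (D.B s) with hP
    have hP0 : P 0 := by
      obtain ⟨s, hs, hxs⟩ := D.exists_level hx 0
      obtain ⟨t, ht, hyt⟩ := D.exists_level hy 0
      rw [List.length_eq_zero_iff] at hs ht
      subst hs; subst ht
      exact ⟨[], rfl, hxs, hyt⟩
    have hPN : ¬ P N := by
      rintro ⟨s, hs, hxs, hys⟩
      have h1 : |x - y| ≤ D.B s - D.A s := by
        rw [abs_sub_le_iff]
        constructor <;> linarith [hxs.1, hxs.2, hys.1, hys.2]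
      have h2 := (D.len_bounds s).2
      rw [hs] at h2
      linarith
    have hEx : ∃ n, ¬ P n := ⟨N, hPN⟩
    set n₀ := Nat.find hEx with hn₀
    have hn₀pos : 1 ≤ n₀ := by
      rcases Nat.eq_zero_or_pos n₀ with h0 | h; · exact absurd hP0 (h0 ▸ Nat.find_spec hEx)
      exact h
    set n := n₀ - 1 with hn
    have hPn : P n := by
      have := Nat.find_min hEx (show n < n₀ by omega)
      simpa using not_not.mp this
    have hPn1 : ¬ P (n + 1) := by
      have : n + 1 = n₀ := by omega
      rw [this]; exact Nat.find_spec hEx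
    obtain ⟨s, hslen, hxs, hys⟩ := hPn
    -- x, y lie in distinct children of s
    obtain ⟨sx, hsxlen, hxsx⟩ := D.exists_level hx (n+1)
    obtain ⟨sy, hsylen, hysy⟩ := D.exists_level hy (n+1)
    obtain ⟨c, s1, rfl⟩ : ∃ c s1, sx = c :: s1 := by
      cases sx with
      | nil => simp at hsxlen
      | cons c s1 => exact ⟨c, s1, rfl⟩
    obtain ⟨d, s2, rfl⟩ : ∃ d s2, sy = d :: s2 := by
      cases sy with
      | nil => simp at hsylen
      | cons d s2 => exact ⟨d, s2, rfl⟩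
    simp only [List.length_cons, Nat.add_right_cancel_iff] at hsxlen hsylen
    have hs1 : s1 = s := D.eq_of_mem (by rw [hsxlen, hslen]) (D.mem_of_append (t := [c]) hxsx) hxs
    have hs2 : s2 = s := D.eq_of_mem (by rw [hsylen, hslen]) (D.mem_of_append (t := [d]) hysy) hys
    rw [hs1] at hxsx
    rw [hs2] at hysy
    have hcd : c ≠ d := by
      rintro rfl
      exact hPn1 ⟨c :: s, by simp [hslen], hxsx, hysy⟩
    -- gap estimate
    have hgap := D.gap s
    have hlen1 := (D.len_bounds s).1
    rw [hslen] at hlen1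
    have h18 : (0:ℝ) < ((1:ℝ)/8)^n := by positivity
    have hdist : (1/2) * ((1:ℝ)/8)^n ≤ |x - y| := by
      cases c <;> cases d
      · exact absurd rfl hcd
      · -- x in false child, y in true child
        have h1 := hxsx.2; have h2 := hysy.1
        rw [abs_sub_comm, abs_of_nonneg (by linarith)]
        linarith
      · have h1 := hysy.2; have h2 := hxsx.1
        rw [abs_of_nonneg (by linarith)]
        linarith
      · exact absurd rfl hcd
    -- f values both in [U s, V s]
    have hfx := D.f_mem hxs
    have hfy := D.f_mem hys
    have hVU := V_sub_U s
    rw [hslen] at hVU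
    have hfd : |D.f x - D.f y| ≤ ((1:ℝ)/2)^n := by
      rw [abs_sub_le_iff]
      constructor <;> linarith [hfx.1, hfx.2, hfy.1, hfy.2]
    -- numeric conclusion
    have h8 : ((1:ℝ)/8)^(n+1) ≤ |x - y| := by
      have : ((1:ℝ)/8)^(n+1) = (1/8) * ((1:ℝ)/8)^n := by ring
      have h18 : (0:ℝ) < ((1:ℝ)/8)^n := by positivity
      rw [this]; linarith
    have hrpow : (((1:ℝ)/8)^(n+1)) ^ ((1:ℝ)/3) ≤ |x - y| ^ ((1:ℝ)/3) :=
      Real.rpow_le_rpow (by positivity) h8 (by norm_num)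
    rw [cube_root] at hrpow
    have : ((1:ℝ)/2)^n = 2 * ((1:ℝ)/2)^(n+1) := by ring
    calc |D.f x - D.f y| ≤ ((1:ℝ)/2)^n := hfd
      _ = 2 * ((1:ℝ)/2)^(n+1) := this
      _ ≤ 2 * |x - y| ^ ((1:ℝ)/3) := by linarith


end Data


noncomputable def ch (t : ℝ) : ℕ → List Bool
  | 0 => []
  | n+1 => (if U (ch t n) + ((1:ℝ)/2)^(n+1) ≤ t then true else false) :: ch t n

lemma ch_len (t : ℝ) : ∀ n, (ch t n).length = n := by
  intro n
  induction n with
  | zero => rfl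
  | succ n ih => rw [ch, List.length_cons, ih]

lemma ch_inv {t : ℝ} (ht : t ∈ Set.Icc (0:ℝ) 1) : ∀ n, U (ch t n) ≤ t ∧ t ≤ V (ch t n) := by
  intro n
  induction n with
  | zero =>
    constructor
    · rw [show ch t 0 = [] from rfl, U_nil]; exact ht.1
    · rw [show ch t 0 = [] from rfl, V_nil]; exact ht.2
  | succ n ih =>
    rw [ch]
    split_ifs with h
    · constructor
      · rw [U_cons_true, ch_len]; exact h
      · rw [V_cons_true]; exact ih.2
    · constructor
      · rw [U_cons_false]; exact ih.1
      · rw [V_cons_false, ch_len]; exact (not_le.mp h).le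

lemma ch_suffix (t : ℝ) (n : ℕ) : ∀ k, ∃ u, ch t (n + k) = u ++ ch t n := by
  intro k
  induction k with
  | zero => exact ⟨[], rfl⟩
  | succ k ih =>
    obtain ⟨u, hu⟩ := ih
    exact ⟨(if U (ch t (n+k)) + ((1:ℝ)/2)^(n+k+1) ≤ t then true else false) :: u,
      by rw [show n + (k+1) = (n+k)+1 from rfl, ch, hu, List.cons_append]⟩

lemma Data.surj (D : Data) {t : ℝ} (ht : t ∈ Set.Icc (0:ℝ) 1) :
    ∃ x : ℝ, D.InF x ∧ D.f x = t := by
  have mono : ∀ n m : ℕ, n ≤ m →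
      D.A (ch t n) ≤ D.A (ch t m) ∧ D.B (ch t m) ≤ D.B (ch t n) := by
    intro n m h
    obtain ⟨u, hu⟩ := ch_suffix t n (m - n)
    rw [show n + (m - n) = m from by omega] at hu
    rw [hu]
    exact D.nest_append u (ch t n)
  set g : ℕ → ℝ := fun n => D.A (ch t n) with hg
  have hbdd : BddAbove (Set.range g) := by
    refine ⟨1, ?_⟩
    rintro _ ⟨m, rfl⟩
    have h1 := (D.A_le_B (ch t m)).trans (mono 0 m (Nat.zero_le m)).2
    rwa [show ch t 0 = [] from rfl, D.B_nil] at h1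
  set x := sSup (Set.range g) with hx
  have hxA : ∀ n, D.A (ch t n) ≤ x := fun n => le_csSup hbdd ⟨n, rfl⟩
  have hxB : ∀ n, x ≤ D.B (ch t n) := by
    intro n
    refine csSup_le ⟨g 0, ⟨0, rfl⟩⟩ ?_
    rintro _ ⟨m, rfl⟩
    rcases le_total n m with h | h
    · exact (D.A_le_B _).trans (mono n m h).2
    · exact (mono m n h).1.trans (D.A_le_B _)
  have hmem : ∀ n, x ∈ Set.Icc (D.A (ch t n)) (D.B (ch t n)) := fun n => ⟨hxA n, hxB n⟩
  refine ⟨x, ?_, ?_⟩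
  · intro n hn
    refine ⟨idx (ch t n), ?_, ?_⟩
    · rw [Finset.mem_Icc]
      have h := idx_range (ch t n)
      rwa [ch_len] at h
    · exact hmem n
  · have key : ∀ n, |D.f x - t| ≤ ((1:ℝ)/2)^n := by
      intro n
      have h1 := D.f_mem (hmem n)
      have h2 := ch_inv ht n
      have hVU := V_sub_U (ch t n)
      rw [ch_len] at hVU
      rw [abs_sub_le_iff]
      constructor <;> linarith [h1.1, h1.2, h2.1, h2.2]
    have h0 : |D.f x - t| ≤ 0 :=
      ge_of_tendsto' (tendsto_pow_atTop_nhds_zero_of_lt_one (by norm_num) (by norm_num)) key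
    have := abs_nonpos_iff.mp h0
    linarith [abs_nonneg (D.f x - t), sub_eq_zero.mp this]

end Stmt16
open Stmt16 MeasureTheory MeasureTheory.Measure Filter Topology NNReal ENNReal in
/-- Example 5.2: the Cantor-type construction driven by `k_ℓ = (q_ℓ, 1/2 − q_ℓ)` with
`1/8 ≤ q_ℓ ≤ 3/8` produces a limit set `F` with `1/3 ≤ dim_H F ≤ log 2 / log(8/3)`. -/
theorem stmt_16
    (q : ℕ → ℝ) (hq : ∀ ℓ : ℕ, 1 / 8 ≤ q ℓ ∧ q ℓ ≤ 3 / 8)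
    (k1 k2 : ℕ → ℝ)
    (hk1 : ∀ ℓ : ℕ, k1 ℓ = q ℓ)
    (hk2 : ∀ ℓ : ℕ, k2 ℓ = 1 / 2 - q ℓ)
    (a b : ℕ → ℝ)
    (ha0 : a 0 = 0) (hb0 : b 0 = 1)
    (haL : ∀ ℓ : ℕ, a (2 * ℓ + 1) = a ℓ)
    (hbL : ∀ ℓ : ℕ, b (2 * ℓ + 1) = a ℓ + k1 ℓ * (b ℓ - a ℓ))
    (haR : ∀ ℓ : ℕ, a (2 * ℓ + 2) = b ℓ - k2 ℓ * (b ℓ - a ℓ))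
    (hbR : ∀ ℓ : ℕ, b (2 * ℓ + 2) = b ℓ)
    (F : Set ℝ)
    (hF : F = ⋂ (n : ℕ) (_ : 1 ≤ n),
      ⋃ ℓ ∈ Finset.Icc (2 ^ n - 1) (2 ^ (n + 1) - 2), Set.Icc (a ℓ) (b ℓ)) :
    1 / 3 ≤ dimH F ∧ dimH F ≤ ENNReal.ofReal (Real.log 2 / Real.log (8 / 3)) := by
  set D : Data := ⟨q, a, b, fun ℓ => (hq ℓ).1, fun ℓ => (hq ℓ).2, ha0, hb0, haL,
    fun ℓ => by rw [hbL, hk1], fun ℓ => by rw [haR, hk2], hbR⟩ with hD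
  have hDa : D.a = a := by rw [hD]
  have hDb : D.b = b := by rw [hD]
  have hInF : ∀ x, x ∈ F ↔ D.InF x := by
    intro x
    rw [hF]
    simp only [Set.mem_iInter, Set.mem_iUnion, exists_prop, Data.InF, hDa, hDb]
  constructor
  · -- lower bound via the Hölder map D.f
    have holder : HolderOnWith 2 (1/3 : ℝ≥0) D.f F := by
      intro x hx y hy
      have h := D.holder_aux ((hInF x).1 hx) ((hInF y).1 hy)
      rw [edist_dist, edist_dist]
      have e1 : ENNReal.ofReal (dist (D.f x) (D.f y)) ≤
          ENNReal.ofReal (2 * dist x y ^ ((1:ℝ)/3)) := by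
        apply ENNReal.ofReal_le_ofReal
        rw [Real.dist_eq, Real.dist_eq]
        exact h
      refine e1.trans (le_of_eq ?_)
      rw [ENNReal.ofReal_mul (by norm_num), ← ENNReal.ofReal_rpow_of_nonneg dist_nonneg (by norm_num)]
      norm_num
    have himg := holder.dimH_image_le (by norm_num : (0:ℝ≥0) < 1/3)
    have hone : dimH (Set.Icc (0:ℝ) 1) = 1 := by
      have h := Real.dimH_of_nonempty_interior (s := Set.Icc (0:ℝ) 1)
        (by rw [interior_Icc]; exact ⟨1/2, by norm_num⟩)
      simpa using h
    have hsub : Set.Icc (0:ℝ) 1 ⊆ D.f '' F := by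
      intro u hu
      obtain ⟨x, hxF, hfx⟩ := D.surj hu
      exact ⟨x, (hInF x).2 hxF, hfx⟩
    have h1 : (1:ℝ≥0∞) ≤ dimH F / ((1/3 : ℝ≥0) : ℝ≥0∞) := by
      calc (1:ℝ≥0∞) = dimH (Set.Icc (0:ℝ) 1) := hone.symm
        _ ≤ dimH (D.f '' F) := dimH_mono hsub
        _ ≤ dimH F / ((1/3 : ℝ≥0) : ℝ≥0∞) := himg
    have h2 := (ENNReal.le_div_iff_mul_le (Or.inl (by norm_num)) (Or.inl ENNReal.coe_ne_top)).mp h1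
    rw [one_mul] at h2
    refine le_trans (le_of_eq ?_) h2
    norm_num
  · -- upper bound via coverings
    set dd := Real.log 2 / Real.log (8/3) with hdd
    have hd : 0 < dd := div_pos (Real.log_pos one_lt_two) (Real.log_pos (by norm_num))
    have key : ((3:ℝ)/8) ^ dd = 1/2 := by
      have hne : Real.log (8/3) ≠ 0 := ne_of_gt (Real.log_pos (by norm_num))
      rw [Real.rpow_def_of_pos (by norm_num), show (3/8:ℝ) = (8/3:ℝ)⁻¹ by norm_num,
        Real.log_inv, hdd, show -Real.log (8/3) * (Real.log 2 / Real.log (8/3)) =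
          -Real.log 2 by field_simp,
        Real.exp_neg, Real.exp_log two_pos]
      norm_num
    have hdiam : ∀ n : ℕ, ∀ i : (Finset.Icc (2^(n+1) - 1) (2^(n+1+1) - 2) : Finset ℕ),
        EMetric.diam (Set.Icc (a i) (b i)) ≤ ENNReal.ofReal (((3:ℝ)/8)^(n+1)) := by
      intro n i
      obtain ⟨s, hslen, hsidx⟩ := idx_surj (n+1) i (Finset.mem_Icc.mp i.2).1 (Finset.mem_Icc.mp i.2).2
      rw [show EMetric.diam (Set.Icc (a i) (b i)) = Metric.ediam (Set.Icc (a i) (b i)) from rfl, Real.ediam_Icc]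
      apply ENNReal.ofReal_le_ofReal
      have h := (D.len_bounds s).2
      rw [hslen] at h
      have hA : D.A s = a (i : ℕ) := by rw [Data.A, hsidx, hDa]
      have hB : D.B s = b (i : ℕ) := by rw [Data.B, hsidx, hDb]
      rw [hA, hB] at h
      exact h
    have hr : Tendsto (fun n : ℕ => ENNReal.ofReal (((3:ℝ)/8)^(n+1))) atTop (𝓝 0) := by
      have h1 : Tendsto (fun n : ℕ => ((3:ℝ)/8)^(n+1)) atTop (𝓝 0) :=
        (tendsto_pow_atTop_nhds_zero_of_lt_one (by norm_num : (0:ℝ) ≤ 3/8)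
          (by norm_num)).comp (tendsto_add_atTop_nat 1)
      have h2 := ENNReal.tendsto_ofReal h1
      simpa using h2
    have hμ := MeasureTheory.Measure.hausdorffMeasure_le_liminf_sum dd F
      (fun n : ℕ => ENNReal.ofReal (((3:ℝ)/8)^(n+1))) hr
      (fun n (i : (Finset.Icc (2^(n+1) - 1) (2^(n+1+1) - 2) : Finset ℕ)) => Set.Icc (a i) (b i))
      (Eventually.of_forall hdiam)
      (Eventually.of_forall (fun n => by
        intro x hx
        rw [hF] at hx
        have h1 := Set.mem_iInter.mp hx (n+1)
        have h2 := Set.mem_iInter.mp h1 (by omega)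
        obtain ⟨ℓ, hℓ, hxl⟩ := Set.mem_iUnion₂.mp h2
        exact Set.mem_iUnion.mpr ⟨⟨ℓ, hℓ⟩, hxl⟩))
    have hterm : ∀ n : ℕ,
        (∑ i : (Finset.Icc (2^(n+1) - 1) (2^(n+1+1) - 2) : Finset ℕ),
          EMetric.diam (Set.Icc (a i) (b i)) ^ dd) ≤ 1 := by
      intro n
      have hbound : ∀ i : (Finset.Icc (2^(n+1) - 1) (2^(n+1+1) - 2) : Finset ℕ),
          EMetric.diam (Set.Icc (a i) (b i)) ^ dd ≤ ENNReal.ofReal (((1:ℝ)/2)^(n+1)) := by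
        intro i
        calc EMetric.diam (Set.Icc (a i) (b i)) ^ dd
            ≤ (ENNReal.ofReal (((3:ℝ)/8)^(n+1))) ^ dd :=
              ENNReal.rpow_le_rpow (hdiam n i) hd.le
          _ = ENNReal.ofReal ((((3:ℝ)/8)^(n+1)) ^ dd) :=
              ENNReal.ofReal_rpow_of_nonneg (by positivity) hd.le
          _ = ENNReal.ofReal (((1:ℝ)/2)^(n+1)) := by
              rw [← Real.rpow_natCast ((3:ℝ)/8) (n+1), ← Real.rpow_mul (by norm_num),
                mul_comm, Real.rpow_mul (by norm_num), Real.rpow_natCast, key]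
      calc (∑ i : (Finset.Icc (2^(n+1) - 1) (2^(n+1+1) - 2) : Finset ℕ),
            EMetric.diam (Set.Icc (a i) (b i)) ^ dd)
          ≤ ∑ _i : (Finset.Icc (2^(n+1) - 1) (2^(n+1+1) - 2) : Finset ℕ),
            ENNReal.ofReal (((1:ℝ)/2)^(n+1)) :=
            Finset.sum_le_sum (fun i _ => hbound i)
        _ = (Fintype.card (Finset.Icc (2^(n+1) - 1) (2^(n+1+1) - 2) : Finset ℕ)) •
            ENNReal.ofReal (((1:ℝ)/2)^(n+1)) := by
            rw [Finset.sum_const, Finset.card_univ]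
        _ = 1 := by
            rw [Fintype.card_coe, Nat.card_Icc]
            have hcard : 2^(n+1+1) - 2 + 1 - (2^(n+1) - 1) = 2^(n+1) := by
              have h1 : 1 ≤ (2:ℕ)^(n+1) := Nat.one_le_two_pow
              have h2 : (2:ℕ)^(n+1+1) = 2 * 2^(n+1) := by ring
              omega
            rw [hcard, nsmul_eq_mul]
            rw [show ((2^(n+1) : ℕ) : ℝ≥0∞) = ENNReal.ofReal ((2:ℝ)^(n+1)) by
              rw [ENNReal.ofReal_pow (by norm_num)]; push_cast; norm_num]
            rw [← ENNReal.ofReal_mul (by positivity), ← mul_pow]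
            norm_num
    have hlim : μH[dd] F ≤ 1 := by
      refine hμ.trans ?_
      refine le_trans (liminf_le_liminf (Eventually.of_forall hterm)) ?_
      simp [liminf_const]
    have hne : μH[(dd.toNNReal : ℝ)] F ≠ ⊤ := by
      rw [Real.coe_toNNReal dd hd.le]
      exact ne_top_of_le_ne_top ENNReal.one_ne_top hlim
    have hfin := dimH_le_of_hausdorffMeasure_ne_top hne
    exact hfin.trans_eq (by rw [ENNReal.ofReal])
end

section
/- Let Σ_{n=0}^∞ a_n be a convergent series of positive terms with sum L. Define b_1 = ((3/2)L − a_0)/(2·(3/2)L) and, for n ≥ 2, b_n = ((3/2)L − Σ_{i=0}^{n−1} a_i)/(2((3/2)L − Σ_{i=0}^{n−2} a_i)). Drive the Cantor-type construction by the sequence k_ℓ = (b_n, b_n) whenever 2^{n−1} − 1 ≤ ℓ ≤ 2^n − 2 (n ≥ 1). Then every interval E_ℓ of the n-th generation (i.e., with 2^n − 1 ≤ ℓ ≤ 2^{n+1} − 2) has length b_1 b_2 ⋯ b_n = ((3/2)L − Σ_{i=0}^{n−1} a_i)/(2^n · (3/2)L), and the limit set F has Lebesgue measure equal to 1/3. 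-/
/-- Example 5.3: given a convergent series `∑ a_n = L` of positive terms, driving the
Cantor-type construction by `k_ℓ = (b_n, b_n)` on the `n`-th generation (where
`b_n = ((3/2)L − ∑_{i<n} a_i) / (2((3/2)L − ∑_{i<n−1} a_i))`) yields intervals of the
`n`-th generation of length `b_1⋯b_n = ((3/2)L − ∑_{i<n} a_i)/(2^n (3/2)L)`, and the
limit set has Lebesgue measure `1/3`. -/
theorem stmt_17
    (aa : ℕ → ℝ) (haa : ∀ n : ℕ, 0 < aa n) (L : ℝ) (hL : HasSum aa L)
    (bb : ℕ → ℝ)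
    (hbb : ∀ n : ℕ, 1 ≤ n → bb n =
      (3 / 2 * L - ∑ i ∈ Finset.range n, aa i) /
        (2 * (3 / 2 * L - ∑ i ∈ Finset.range (n - 1), aa i)))
    (k1 k2 : ℕ → ℝ)
    (hk : ∀ n : ℕ, 1 ≤ n → ∀ ℓ : ℕ, 2 ^ (n - 1) - 1 ≤ ℓ → ℓ ≤ 2 ^ n - 2 →
      k1 ℓ = bb n ∧ k2 ℓ = bb n)
    (a b : ℕ → ℝ)
    (ha0 : a 0 = 0) (hb0 : b 0 = 1)
    (haL : ∀ ℓ : ℕ, a (2 * ℓ + 1) = a ℓ)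
    (hbL : ∀ ℓ : ℕ, b (2 * ℓ + 1) = a ℓ + k1 ℓ * (b ℓ - a ℓ))
    (haR : ∀ ℓ : ℕ, a (2 * ℓ + 2) = b ℓ - k2 ℓ * (b ℓ - a ℓ))
    (hbR : ∀ ℓ : ℕ, b (2 * ℓ + 2) = b ℓ)
    (F : Set ℝ)
    (hF : F = ⋂ (n : ℕ) (_ : 1 ≤ n),
      ⋃ ℓ ∈ Finset.Icc (2 ^ n - 1) (2 ^ (n + 1) - 2), Set.Icc (a ℓ) (b ℓ)) :
    (∀ n : ℕ, 1 ≤ n → ∀ ℓ : ℕ, 2 ^ n - 1 ≤ ℓ → ℓ ≤ 2 ^ (n + 1) - 2 →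
      b ℓ - a ℓ = ∏ i ∈ Finset.Icc 1 n, bb i ∧
      ∏ i ∈ Finset.Icc 1 n, bb i =
        (3 / 2 * L - ∑ i ∈ Finset.range n, aa i) / (2 ^ n * (3 / 2 * L))) ∧
    MeasureTheory.volume F = ENNReal.ofReal (1 / 3) := by
  classical
  obtain ⟨c, hc⟩ : ∃ c : ℕ → ℝ, ∀ n, c n = 3/2*L - ∑ i ∈ Finset.range n, aa i :=
    ⟨_, fun n => rfl⟩
  obtain ⟨P, hPdef⟩ : ∃ P : ℕ → ℝ, ∀ n, P n = ∏ i ∈ Finset.Icc 1 n, bb i :=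
    ⟨_, fun n => rfl⟩
  have hsle : ∀ n, ∑ i ∈ Finset.range n, aa i ≤ L :=
    fun n => sum_le_hasSum _ (fun i _ => (haa i).le) hL
  have hslt : ∀ n, ∑ i ∈ Finset.range n, aa i < L := by
    intro n
    have h1 := hsle (n+1)
    rw [Finset.sum_range_succ] at h1
    have := haa n
    linarith
  have hL0 : 0 < L := by
    have := hslt 0
    simpa using this
  have hcpos : ∀ n, 0 < c n := by
    intro n
    rw [hc]
    have := hslt n
    linarith
  have hc0 : c 0 = 3/2*L := by simp [hc]
  have hcdec : ∀ n, c (n+1) < c n := by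
    intro n
    rw [hc, hc, Finset.sum_range_succ]
    have := haa n
    linarith
  have hbb' : ∀ n : ℕ, bb (n+1) = c (n+1) / (2 * c n) := by
    intro n
    rw [hc, hc]
    simpa using hbb (n+1) (by omega)
  have hbbpos : ∀ n : ℕ, 0 < bb (n+1) := by
    intro n
    rw [hbb']
    exact div_pos (hcpos _) (by linarith [hcpos n])
  have hbblt : ∀ n : ℕ, bb (n+1) < 1/2 := by
    intro n
    rw [hbb', div_lt_iff₀ (by linarith [hcpos n])]
    have := hcdec n
    linarith
  -- product formula
  have hPsucc : ∀ n, P (n+1) = P n * bb (n+1) := by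
    intro n
    rw [hPdef, hPdef, Finset.prod_Icc_succ_top (by omega)]
  have hP : ∀ n, P n = c n / (2^n * c 0) := by
    intro n
    induction n with
    | zero =>
      rw [hPdef]
      simp [div_self (hcpos 0).ne']
    | succ n ih =>
      rw [hPsucc, ih, hbb' n]
      have h1 := (hcpos n).ne'
      have h2 := (hcpos 0).ne'
      field_simp
      ring
  have hPpos : ∀ n, 0 < P n := by
    intro n
    rw [hP]
    exact div_pos (hcpos n) (mul_pos (by positivity) (hcpos 0))
  -- main structural invariant
  have key : ∀ n : ℕ,
      (∀ ℓ, 2^n - 1 ≤ ℓ → ℓ ≤ 2^(n+1) - 2 →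
        b ℓ - a ℓ = P n ∧ 0 ≤ a ℓ ∧ b ℓ ≤ 1) ∧
      (∀ ℓ ℓ', 2^n - 1 ≤ ℓ → ℓ ≤ 2^(n+1) - 2 → 2^n - 1 ≤ ℓ' → ℓ' ≤ 2^(n+1) - 2 →
        ℓ < ℓ' → b ℓ < a ℓ') := by
    intro n
    induction n with
    | zero =>
      constructor
      · intro ℓ h1 h2
        have hℓ : ℓ = 0 := by norm_num at h2; omega
        subst hℓ
        rw [ha0, hb0, hPdef]
        norm_num
      · intro ℓ ℓ' h1 h2 h1' h2' hlt
        exfalso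
        norm_num at h2 h2'
        omega
    | succ n ih =>
      obtain ⟨ih1, ih2⟩ := ih
      have hN : 1 ≤ 2^n := Nat.one_le_two_pow
      have e1 : 2^(n+1) = 2*2^n := by ring
      have e2 : 2^(n+2) = 4*2^n := by ring
      have parent : ∀ ℓ, 2^(n+1) - 1 ≤ ℓ → ℓ ≤ 2^(n+2) - 2 →
          ∃ m, (2^n - 1 ≤ m ∧ m ≤ 2^(n+1) - 2) ∧ (ℓ = 2*m+1 ∨ ℓ = 2*m+2) := by
        intro ℓ h1 h2
        refine ⟨(ℓ-1)/2, ⟨?_, ?_⟩, ?_⟩ <;> omega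
      have hkm : ∀ m, 2^n - 1 ≤ m → m ≤ 2^(n+1) - 2 →
          k1 m = bb (n+1) ∧ k2 m = bb (n+1) := by
        intro m h1 h2
        exact hk (n+1) (by omega) m (by simpa using h1) h2
      have child : ∀ m, 2^n - 1 ≤ m → m ≤ 2^(n+1) - 2 → ∀ ℓ, (ℓ = 2*m+1 ∨ ℓ = 2*m+2) →
          b ℓ - a ℓ = P (n+1) ∧ a m ≤ a ℓ ∧ b ℓ ≤ b m := by
        intro m h1 h2 ℓ hℓ
        obtain ⟨hd, ha', hb'⟩ := ih1 m h1 h2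
        obtain ⟨hk1, hk2⟩ := hkm m h1 h2
        have hPn := hPpos n
        have hk0 := hbbpos n
        have hkh := hbblt n
        rcases hℓ with rfl | rfl
        · rw [haL, hbL, hk1]
          refine ⟨by rw [hPsucc, hd]; ring, le_refl _, ?_⟩
          nlinarith [hd]
        · rw [haR, hbR, hk2]
          refine ⟨by rw [hPsucc, hd]; ring, ?_, le_refl _⟩
          nlinarith [hd]
      constructor
      · intro ℓ h1 h2
        obtain ⟨m, ⟨hm1, hm2⟩, hℓ⟩ := parent ℓ h1 h2
        obtain ⟨hd, ha', hb'⟩ := child m hm1 hm2 ℓ hℓ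
        obtain ⟨_, ha'', hb''⟩ := ih1 m hm1 hm2
        exact ⟨hd, le_trans ha'' ha', le_trans hb' hb''⟩
      · intro ℓ ℓ' h1 h2 h1' h2' hlt
        obtain ⟨m, ⟨hm1, hm2⟩, hℓ⟩ := parent ℓ h1 h2
        obtain ⟨m', ⟨hm1', hm2'⟩, hℓ'⟩ := parent ℓ' h1' h2'
        rcases lt_trichotomy m m' with hmm | hmm | hmm
        · obtain ⟨_, _, hb'⟩ := child m hm1 hm2 ℓ hℓ
          obtain ⟨_, ha'', _⟩ := child m' hm1' hm2' ℓ' hℓ'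
          have := ih2 m m' hm1 hm2 hm1' hm2' hmm
          linarith
        · subst hmm
          have hℓeq : ℓ = 2*m+1 ∧ ℓ' = 2*m+2 := by omega
          obtain ⟨rfl, rfl⟩ := hℓeq
          obtain ⟨hd, ha', hb'⟩ := ih1 m hm1 hm2
          obtain ⟨hk1, hk2⟩ := hkm m hm1 hm2
          rw [hbL, haR, hk1, hk2]
          have hPn := hPpos n
          have hk0 := hbbpos n
          have hkh := hbblt n
          nlinarith [hd]
        · omega
  -- Part 1 of the conclusion
  have part1 : ∀ n : ℕ, 1 ≤ n → ∀ ℓ : ℕ, 2 ^ n - 1 ≤ ℓ → ℓ ≤ 2 ^ (n + 1) - 2 →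
      b ℓ - a ℓ = ∏ i ∈ Finset.Icc 1 n, bb i ∧
      ∏ i ∈ Finset.Icc 1 n, bb i =
        (3 / 2 * L - ∑ i ∈ Finset.range n, aa i) / (2 ^ n * (3 / 2 * L)) := by
    intro n hn ℓ h1 h2
    obtain ⟨hd, _, _⟩ := (key n).1 ℓ h1 h2
    refine ⟨by rw [hd, hPdef], ?_⟩
    rw [← hPdef, hP, hc0, hc]
  refine ⟨part1, ?_⟩
  -- Measure part
  obtain ⟨U, hU⟩ : ∃ U : ℕ → Set ℝ, ∀ n,
      U n = ⋃ ℓ ∈ Finset.Icc (2 ^ n - 1) (2 ^ (n + 1) - 2), Set.Icc (a ℓ) (b ℓ) :=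
    ⟨_, fun n => rfl⟩
  have hUmeas : ∀ n, MeasurableSet (U n) := by
    intro n
    rw [hU]
    exact (Finset.Icc _ _).measurableSet_biUnion (fun ℓ _ => measurableSet_Icc)
  have hvolU : ∀ n, MeasureTheory.volume (U n) = ENNReal.ofReal (c n / c 0) := by
    intro n
    rw [hU]
    have hdisj : (↑(Finset.Icc (2^n - 1) (2^(n+1) - 2)) : Set ℕ).PairwiseDisjoint
        (fun ℓ => Set.Icc (a ℓ) (b ℓ)) := by
      intro x hx y hy hxy
      simp only [Finset.coe_Icc, Set.mem_Icc] at hx hy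
      have sep : ∀ u v : ℕ, 2^n - 1 ≤ u → u ≤ 2^(n+1) - 2 → 2^n - 1 ≤ v →
          v ≤ 2^(n+1) - 2 → u < v →
          Disjoint (Set.Icc (a u) (b u)) (Set.Icc (a v) (b v)) := by
        intro u v hu1 hu2 hv1 hv2 huv
        have := (key n).2 u v hu1 hu2 hv1 hv2 huv
        apply Set.disjoint_left.2
        intro z hz hz'
        have h1 := hz.2
        have h2 := hz'.1
        linarith
      rcases lt_or_gt_of_ne hxy with h | h
      · exact sep x y hx.1 hx.2 hy.1 hy.2 h
      · exact (sep y x hy.1 hy.2 hx.1 hx.2 h).symm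
    rw [MeasureTheory.measure_biUnion_finset hdisj (fun ℓ _ => measurableSet_Icc)]
    have hvol : ∀ ℓ ∈ Finset.Icc (2^n - 1) (2^(n+1) - 2),
        MeasureTheory.volume (Set.Icc (a ℓ) (b ℓ)) = ENNReal.ofReal (P n) := by
      intro ℓ hℓ
      rw [Finset.mem_Icc] at hℓ
      rw [Real.volume_Icc, ((key n).1 ℓ hℓ.1 hℓ.2).1]
    rw [Finset.sum_congr rfl hvol, Finset.sum_const, Nat.card_Icc]
    have hcard : 2^(n+1) - 2 + 1 - (2^n - 1) = 2^n := by
      have hN : 1 ≤ 2^n := Nat.one_le_two_pow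
      have e1 : 2^(n+1) = 2*2^n := by ring
      omega
    rw [hcard, nsmul_eq_mul, ← ENNReal.ofReal_natCast,
      ← ENNReal.ofReal_mul (Nat.cast_nonneg _)]
    congr 1
    rw [hP]
    have h2 := (hcpos 0).ne'
    push_cast
    field_simp
  have hsub : ∀ n, U (n+1) ⊆ U n := by
    intro n x hx
    rw [hU] at hx ⊢
    simp only [Set.mem_iUnion, Finset.mem_Icc, exists_prop] at hx ⊢
    obtain ⟨ℓ, ⟨h1, h2⟩, hxm⟩ := hx
    have hN : 1 ≤ 2^n := Nat.one_le_two_pow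
    have e1 : 2^(n+1) = 2*2^n := by ring
    have e2 : 2^(n+2) = 4*2^n := by ring
    obtain ⟨m, ⟨hm1, hm2⟩, hℓ⟩ :
        ∃ m, (2^n - 1 ≤ m ∧ m ≤ 2^(n+1) - 2) ∧ (ℓ = 2*m+1 ∨ ℓ = 2*m+2) := by
      refine ⟨(ℓ-1)/2, ⟨?_, ?_⟩, ?_⟩ <;> omega
    refine ⟨m, ⟨hm1, hm2⟩, ?_⟩
    -- x ∈ Icc (a ℓ) (b ℓ) ⊆ Icc (a m) (b m)
    obtain ⟨hd, ha', hb'⟩ := (key n).1 m hm1 hm2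
    obtain ⟨hk1, hk2⟩ := hk (n+1) (by omega) m (by simpa using hm1) hm2
    have hPn := hPpos n
    have hk0 := hbbpos n
    have hkh := hbblt n
    constructor
    · rcases hℓ with rfl | rfl
      · rw [haL] at hxm; exact hxm.1
      · rw [haR, hk2] at hxm
        have := hxm.1
        nlinarith [hd]
    · rcases hℓ with rfl | rfl
      · rw [hbL, hk1] at hxm
        have := hxm.2
        nlinarith [hd]
      · rw [hbR] at hxm; exact hxm.2
  have hFU : F = ⋂ m : ℕ, U (m+1) := by
    rw [hF]
    ext x
    simp only [Set.mem_iInter]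
    constructor
    · intro h m
      rw [hU]
      exact h (m+1) (by omega)
    · intro h n hn
      have := h (n-1)
      rw [hU] at this
      have hn' : n - 1 + 1 = n := by omega
      rwa [hn'] at this
  have hanti : Antitone (fun m => U (m+1)) :=
    antitone_nat_of_succ_le (fun m => hsub (m+1))
  have htend1 : Filter.Tendsto (fun m => MeasureTheory.volume (U (m+1)))
      Filter.atTop (nhds (MeasureTheory.volume F)) := by
    rw [hFU]
    exact MeasureTheory.tendsto_measure_iInter_atTop
      (fun m => (hUmeas (m+1)).nullMeasurableSet) hanti
      ⟨0, by rw [hvolU]; exact ENNReal.ofReal_ne_top⟩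
  have hstend : Filter.Tendsto (fun n => ∑ i ∈ Finset.range n, aa i)
      Filter.atTop (nhds L) := hL.tendsto_sum_nat
  have hctend : Filter.Tendsto (fun m => c (m+1)) Filter.atTop (nhds (L/2)) := by
    have h1 : Filter.Tendsto c Filter.atTop (nhds (L/2)) := by
      have : Filter.Tendsto (fun n => 3/2*L - ∑ i ∈ Finset.range n, aa i)
          Filter.atTop (nhds (3/2*L - L)) := tendsto_const_nhds.sub hstend
      have heq : (fun n => 3/2*L - ∑ i ∈ Finset.range n, aa i) = c := by
        funext n; rw [hc]
      rw [heq] at this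
      convert this using 2
      ring
    exact h1.comp (Filter.tendsto_add_atTop_nat 1)
  have htend2 : Filter.Tendsto (fun m => MeasureTheory.volume (U (m+1)))
      Filter.atTop (nhds (ENNReal.ofReal (1/3))) := by
    have h1 : Filter.Tendsto (fun m => ENNReal.ofReal (c (m+1) / c 0))
        Filter.atTop (nhds (ENNReal.ofReal ((L/2) / c 0))) :=
      (ENNReal.continuous_ofReal.tendsto _).comp (hctend.div_const (c 0))
    have heq : (fun m => MeasureTheory.volume (U (m+1))) =
        (fun m => ENNReal.ofReal (c (m+1) / c 0)) := by
      funext m; rw [hvolU]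
    rw [heq]
    convert h1 using 2
    rw [hc0]
    field_simp
  exact tendsto_nhds_unique htend1 htend2
end
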